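/- arXiv:1601.03084 — 6 statements merged into one kernel-verified Lean document; each statement's English description precedes it below -/
import Mathlib

section
/- Let G be a topological group acting continuously on a topological space X, let K be a compact Hausdorff space with a continuous G-action, and let i : X → K be a continuous G-equivariant map. Then for every continuous function f : K → ℝ, the composition f ∘ i is a π-uniform bounded continuous function on X. -/
theorem stmt_4 (G X K : Type*) [TopologicalSpace G] [Group G] [IsTopologicalGroup G]
    [TopologicalSpace X] [MulAction G X] [ContinuousSMul G X]
    [TopologicalSpace K] [CompactSpace K] [T2Space K] [MulAction G K] [ContinuousSMul G K]
    (i : X → K) (hi : Continuous i) (heq : ∀ (g : G) (x : X), i (g • x) = g • i x)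
    (f : C(K, ℝ)) :
    Continuous (f ∘ i) ∧ (∃ C : ℝ, ∀ x : X, |f (i x)| ≤ C) ∧
    ∀ ε : ℝ, 0 < ε → ∃ V ∈ nhds (1 : G), ∀ x : X, ∀ v ∈ V,
      |f (i x) - f (i (v • x))| < ε := by
  refine ⟨f.continuous.comp hi, ⟨‖f‖, fun x => ?_⟩, fun ε hε => ?_⟩
  · simpa using f.norm_coe_le_norm (i x)
  · set H : C(G × K, ℝ) :=
      f.comp ⟨fun p => p.1 • p.2, continuous_smul⟩ with hH
    have hc : Continuous fun g : G => H.curry g := H.curry.continuous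
    have hone : H.curry 1 = f := by
      ext k; simp [hH, ContinuousMap.curry]
    have ht : Filter.Tendsto (fun g : G => H.curry g) (nhds 1) (nhds f) := by
      have := hc.tendsto 1
      rwa [hone] at this
    have hu : TendstoUniformly (fun g k => H.curry g k) f (nhds 1) :=
      ContinuousMap.tendsto_iff_tendstoUniformly.mp ht
    have := Metric.tendstoUniformly_iff.mp hu ε hε
    refine ⟨{g | ∀ k, dist (f k) (H.curry g k) < ε}, this, fun x v hv => ?_⟩
    have h1 := hv (i x)
    have h3 : H.curry v (i x) = f (i (v • x)) := by
      simp [hH, ContinuousMap.curry, heq]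
    rw [h3, Real.dist_eq] at h1
    calc |f (i x) - f (i (v • x))| = |f (i x) - f (i (v • x))| := rfl
      _ < ε := h1
end

section
/- Let G be a topological group acting continuously on a topological space X. If every π-uniform bounded continuous real-valued function on X is constant, then every equivariant compactification of X is a subsingleton: for every compact Hausdorff space K with a continuous G-action and every continuous G-equivariant map i : X → K with dense image, K has at most one point. -/
theorem stmt_5 (G X : Type*) [TopologicalSpace G] [Group G] [IsTopologicalGroup G]
    [TopologicalSpace X] [MulAction G X] [ContinuousSMul G X]
    (h : ∀ f : X → ℝ, Continuous f → (∃ C : ℝ, ∀ x : X, |f x| ≤ C) →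
      (∀ ε : ℝ, 0 < ε → ∃ V ∈ nhds (1 : G), ∀ x : X, ∀ v ∈ V, |f x - f (v • x)| < ε) →
      ∀ x y : X, f x = f y) :
    ∀ (K : Type*) [TopologicalSpace K] [CompactSpace K] [T2Space K] [MulAction G K]
      [ContinuousSMul G K] (i : X → K), Continuous i →
      (∀ (g : G) (x : X), i (g • x) = g • i x) → DenseRange i → Subsingleton K := by
  intro K _ _ _ _ _ i hi heq hd
  by_contra hK
  rw [not_subsingleton_iff_nontrivial] at hK
  obtain ⟨a, b, hab⟩ := hK
  obtain ⟨f, hfa, hfb, hf01⟩ := exists_continuous_zero_one_of_isClosed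
    (isClosed_singleton (x := a)) (isClosed_singleton (x := b)) (by simpa using hab)
  have key : ∀ ε : ℝ, 0 < ε → ∃ V ∈ nhds (1 : G), ∀ k : K, ∀ v ∈ V,
      |f k - f (v • k)| < ε := by
    intro ε hε
    have hΦ : Continuous (fun p : G × K => f (p.1 • p.2)) :=
      f.continuous.comp continuous_smul
    have step : ∀ k : K, ∃ V ∈ nhds (1 : G), ∃ W ∈ nhds k,
        ∀ v ∈ V, ∀ x ∈ W, |f (v • x) - f k| < ε / 2 := by
      intro k
      have hopen : IsOpen {p : G × K | |f (p.1 • p.2) - f k| < ε / 2} := by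
        have : Continuous fun p : G × K => |f (p.1 • p.2) - f k| :=
          (hΦ.sub continuous_const).abs
        exact isOpen_lt this continuous_const
      have hmem : ((1 : G), k) ∈ {p : G × K | |f (p.1 • p.2) - f k| < ε / 2} := by
        simp only [Set.mem_setOf_eq, one_smul, sub_self, abs_zero]
        linarith
      obtain ⟨V, hV, W, hW, hVW⟩ := mem_nhds_prod_iff.mp (hopen.mem_nhds hmem)
      exact ⟨V, hV, W, hW, fun v hv x hx => hVW (Set.mk_mem_prod hv hx)⟩
    choose V hV W hW hVW using step
    obtain ⟨t, ht⟩ := isCompact_univ.elim_nhds_subcover W (fun k _ => hW k)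
    refine ⟨⋂ k ∈ t, V k, (Filter.biInter_finset_mem t).mpr fun k _ => hV k, ?_⟩
    intro k v hv
    obtain ⟨k₀, hk₀t, hk₀⟩ : ∃ k₀ ∈ t, k ∈ W k₀ := by
      have := ht.2 (Set.mem_univ k); simpa using this
    have hv₀ : v ∈ V k₀ := by
      have := Set.mem_iInter₂.mp hv k₀ hk₀t; exact this
    have h1 := hVW k₀ 1 (mem_of_mem_nhds (hV k₀)) k hk₀
    have h2 := hVW k₀ v hv₀ k hk₀
    rw [one_smul] at h1
    calc |f k - f (v • k)| ≤ |f k - f k₀| + |f k₀ - f (v • k)| := abs_sub_le _ _ _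
      _ < ε / 2 + ε / 2 := by
          rw [abs_sub_comm (f k₀) (f (v • k))]
          exact add_lt_add h1 h2
      _ = ε := by ring
  set F : X → ℝ := fun x => f (i x) with hF
  have hcont : Continuous F := f.continuous.comp hi
  have hbd : ∃ C : ℝ, ∀ x : X, |F x| ≤ C :=
    ⟨1, fun x => abs_le.mpr ⟨by linarith [(hf01 (i x)).1], (hf01 (i x)).2⟩⟩
  have hunif : ∀ ε : ℝ, 0 < ε → ∃ V ∈ nhds (1 : G), ∀ x : X, ∀ v ∈ V,
      |F x - F (v • x)| < ε := by
    intro ε hε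
    obtain ⟨V, hVm, hV'⟩ := key ε hε
    exact ⟨V, hVm, fun x v hv => by
      simpa only [hF, heq] using hV' (i x) v hv⟩
  have hconst := h F hcont hbd hunif
  have hKne : Nonempty K := ⟨a⟩
  have hXne : Nonempty X := hd.nonempty
  obtain ⟨x₀⟩ := hXne
  have hclosed : IsClosed {k : K | f k = F x₀} :=
    isClosed_eq f.continuous continuous_const
  have hsub : Set.range i ⊆ {k : K | f k = F x₀} := by
    rintro _ ⟨x, rfl⟩
    exact hconst x x₀
  have hall : ∀ k : K, f k = F x₀ := by
    intro k
    have : closure (Set.range i) ⊆ {k : K | f k = F x₀} :=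
      closure_minimal hsub hclosed
    exact this (hd k)
  have h0 : f a = 0 := hfa rfl
  have h1 : f b = 1 := hfb rfl
  have := (hall a).trans (hall b).symm
  rw [h0, h1] at this
  exact zero_ne_one this
end

section
/- Let G be a topological group acting continuously on a topological space X, and let x, y ∈ X be points such that f(x) = f(y) for every π-uniform bounded continuous real-valued function f on X. Then for every compact Hausdorff space K with a continuous G-action and every continuous G-equivariant map i : X → K with dense image, one has i(x) = i(y). -/
theorem stmt_6 (G X : Type*) [TopologicalSpace G] [Group G] [IsTopologicalGroup G]
    [TopologicalSpace X] [MulAction G X] [ContinuousSMul G X] (x y : X)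
    (h : ∀ f : X → ℝ, Continuous f → (∃ C : ℝ, ∀ z : X, |f z| ≤ C) →
      (∀ ε : ℝ, 0 < ε → ∃ V ∈ nhds (1 : G), ∀ z : X, ∀ v ∈ V, |f z - f (v • z)| < ε) →
      f x = f y) :
    ∀ (K : Type*) [TopologicalSpace K] [CompactSpace K] [T2Space K] [MulAction G K]
      [ContinuousSMul G K] (i : X → K), Continuous i →
      (∀ (g : G) (z : X), i (g • z) = g • i z) → DenseRange i → i x = i y := by
  intro K _ _ _ _ _ i hi hequiv _
  by_contra hne
  -- Urysohn: separate i x and i y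
  obtain ⟨f, hf0, hf1, hf01⟩ := exists_continuous_zero_one_of_isClosed
    (isClosed_singleton (x := i x)) (isClosed_singleton (x := i y))
    (Set.disjoint_singleton.mpr hne)
  -- f composed with i is π-uniform
  have key : (f ∘ i) x = (f ∘ i) y := by
    apply h
    · exact f.continuous.comp hi
    · exact ⟨1, fun z => by
        have := hf01 (i z)
        rw [abs_le]; constructor <;> simp at this ⊢ <;> linarith [this.1, this.2]⟩
    · intro ε hε
      -- need V nbhd of 1 with ∀ k : K, ∀ v ∈ V, |f k - f (v • k)| < ε
      set S : Set (G × K) := {p | |f p.2 - f (p.1 • p.2)| < ε} with hS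
      have hSopen : IsOpen S := by
        have hc : Continuous fun p : G × K => |f p.2 - f (p.1 • p.2)| := by
          fun_prop
        have : S = (fun p : G × K => |f p.2 - f (p.1 • p.2)|) ⁻¹' Set.Iio ε := rfl
        rw [this]; exact isOpen_Iio.preimage hc
      have hsub : ({1} : Set G) ×ˢ (Set.univ : Set K) ⊆ S := by
        rintro ⟨g, k⟩ ⟨hg, -⟩
        simp only [Set.mem_singleton_iff] at hg
        subst hg
        simp [hS, hε]
      obtain ⟨U, V, hUo, -, h1U, hKV, hUV⟩ :=
        generalized_tube_lemma isCompact_singleton isCompact_univ hSopen hsub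
      refine ⟨U, hUo.mem_nhds (h1U rfl), fun z v hv => ?_⟩
      have : (v, i z) ∈ S := hUV ⟨hv, hKV (Set.mem_univ _)⟩
      simpa [hS, hequiv] using this
  simp [hf0 rfl, hf1 rfl] at key
end

section
/- Let M be the metric fan and G the Megrelishvili group with the compact-open topology, acting on M by evaluation. Then the action map G × M → M is continuous. -/
noncomputable section

/-- The group of self-homeomorphisms of a topological space, under composition. -/
instance homeoGroup (X : Type*) [TopologicalSpace X] : Group (X ≃ₜ X) where
  mul a b := b.trans a
  one := Homeomorph.refl X
  inv := Homeomorph.symm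
  mul_assoc a b c := Homeomorph.ext fun _ => rfl
  one_mul a := Homeomorph.ext fun _ => rfl
  mul_one a := Homeomorph.ext fun _ => rfl
  inv_mul_cancel a := Homeomorph.ext fun x => a.symm_apply_apply x

/-- The real Hilbert space `ℓ²(ℕ₊)`. -/
abbrev FanAmbient : Type := lp (fun _ : ℕ+ => ℝ) 2

/-- The `n`-th basic vector `eₙ` of `ℓ²(ℕ₊)`, `n ≥ 1`. -/
def fanBasis (n : ℕ+) : FanAmbient := lp.single 2 n 1

/-- The metric fan: the union of the straight-line segments `[0, eₙ]`, `n ≥ 1`,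
inside `ℓ²(ℕ₊)`, with the subspace topology. -/
def MetricFan : Set FanAmbient := ⋃ n : ℕ+, segment ℝ 0 (fanBasis n)

/-- The marked points of the metric fan: the points `(1/k)eₙ`, `k, n ≥ 1`. -/
def FanMarked : Set ↥MetricFan :=
  {x | ∃ k n : ℕ+, (x : FanAmbient) = ((k : ℝ))⁻¹ • fanBasis n}

/-- The Megrelishvili group: all homeomorphisms of the metric fan fixing every
marked point. -/
def MegGroup : Subgroup (↥MetricFan ≃ₜ ↥MetricFan) where
  carrier := {g | ∀ x ∈ FanMarked, g x = x}
  one_mem' := fun x _ => rfl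
  mul_mem' := by
    intro a b ha hb x hx
    show a (b x) = x
    rw [hb x hx, ha x hx]
  inv_mem' := by
    intro a ha x hx
    show a.symm x = x
    conv_lhs => rw [← ha x hx]
    exact a.symm_apply_apply x

/-- The Megrelishvili group carries the compact-open topology. -/
instance : TopologicalSpace MegGroup :=
  TopologicalSpace.induced
    (fun g : MegGroup => toContinuousMap (g : ↥MetricFan ≃ₜ ↥MetricFan))
    ContinuousMap.compactOpen

/-- The endpoint `eₙ` of the metric fan. -/
def fanPoint (n : ℕ+) : ↥MetricFan :=
  ⟨fanBasis n, Set.mem_iUnion.2 ⟨n, right_mem_segment ℝ 0 (fanBasis n)⟩⟩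

/-- The base point `0` of the metric fan. -/
def fanZero : ↥MetricFan :=
  ⟨0, Set.mem_iUnion.2 ⟨1, left_mem_segment ℝ 0 (fanBasis 1)⟩⟩


namespace MegHelper
open Set Filter Metric Topology

lemma fanBasis_apply_self (n : ℕ+) : fanBasis n n = 1 := lp.single_apply_self _ _ _

lemma norm_fanBasis (n : ℕ+) : ‖fanBasis n‖ = 1 := by
  have h := lp.norm_single (p := 2) (E := fun _ : ℕ+ => ℝ) (by norm_num) n (1:ℝ)
  simpa [fanBasis] using h

lemma smul_basis_apply (t : ℝ) (n m : ℕ+) :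
    (t • fanBasis n) m = if m = n then t else 0 := by
  have : (t • fanBasis n) m = t • (fanBasis n m) := by
    rw [lp.coeFn_smul]; rfl
  rw [this]
  by_cases h : m = n
  · subst h; rw [fanBasis_apply_self, if_pos rfl]; simp
  · rw [if_neg h, fanBasis]; rw [lp.single_apply_ne _ _ _ h]; simp

lemma norm_smul_basis (t : ℝ) (n : ℕ+) : ‖t • fanBasis n‖ = |t| := by
  rw [norm_smul, norm_fanBasis, mul_one, Real.norm_eq_abs]

lemma mem_fan_iff {x : FanAmbient} :
    x ∈ MetricFan ↔ ∃ n : ℕ+, ∃ t : ℝ, t ∈ Icc (0:ℝ) 1 ∧ x = t • fanBasis n := by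
  rw [MetricFan, Set.mem_iUnion]
  constructor
  · rintro ⟨n, hn⟩
    rw [segment_eq_image] at hn
    obtain ⟨t, ht, hx⟩ := hn
    exact ⟨n, t, ht, by simpa using hx.symm⟩
  · rintro ⟨n, t, ht, rfl⟩
    refine ⟨n, ?_⟩
    rw [segment_eq_image]
    exact ⟨t, ht, by simp⟩

lemma coord_nonneg {x : FanAmbient} (hx : x ∈ MetricFan) (m : ℕ+) : 0 ≤ x m := by
  obtain ⟨n, t, ht, rfl⟩ := mem_fan_iff.1 hx
  rw [smul_basis_apply]
  split <;> simp [ht.1]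

lemma norm_le_one {x : FanAmbient} (hx : x ∈ MetricFan) : ‖x‖ ≤ 1 := by
  obtain ⟨n, t, ht, rfl⟩ := mem_fan_iff.1 hx
  rw [norm_smul_basis, abs_of_nonneg ht.1]; exact ht.2

lemma continuous_coord (m : ℕ+) : Continuous (fun x : FanAmbient => x m) := by
  have : LipschitzWith 1 (fun x : FanAmbient => x m) := by
    refine LipschitzWith.of_dist_le_mul fun x y => ?_
    rw [NNReal.coe_one, one_mul, dist_eq_norm, dist_eq_norm]
    have h1 : x m - y m = (x - y) m := by rw [lp.coeFn_sub]; rfl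
    calc ‖x m - y m‖ = ‖(x - y) m‖ := by rw [h1]
    _ ≤ ‖x - y‖ := lp.norm_apply_le_norm (by norm_num) _ m
  exact this.continuous

/-- clip to [0,1] -/
def clip (t : ℝ) : ℝ := max 0 (min t 1)

lemma clip_mem (t : ℝ) : clip t ∈ Icc (0:ℝ) 1 :=
  ⟨le_max_left _ _, max_le (by norm_num) (min_le_right _ _)⟩

lemma clip_eq {t : ℝ} (h : t ∈ Icc (0:ℝ) 1) : clip t = t := by
  rw [clip, min_eq_left h.2, max_eq_right h.1]

lemma clip_lipschitz (a b : ℝ) : |clip a - clip b| ≤ |a - b| := by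
  rw [clip, clip]
  calc |max 0 (min a 1) - max 0 (min b 1)|
      ≤ |min a 1 - min b 1| := by
        rw [max_comm 0 _, max_comm 0 _]; exact abs_max_sub_max_le_abs _ _ _
    _ ≤ |a - b| := by
        simpa using abs_min_sub_min_le_max a 1 b 1

lemma continuous_clip : Continuous clip :=
  continuous_const.max (continuous_id.min continuous_const)

def fanCurve (n : ℕ+) (t : ℝ) : ↥MetricFan :=
  ⟨clip t • fanBasis n, mem_fan_iff.2 ⟨n, clip t, clip_mem t, rfl⟩⟩

lemma continuous_fanCurve (n : ℕ+) : Continuous (fanCurve n) :=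
  Continuous.subtype_mk (continuous_clip.smul continuous_const) _

lemma fanCurve_coe (n : ℕ+) {t : ℝ} (h : t ∈ Icc (0:ℝ) 1) :
    (fanCurve n t : FanAmbient) = t • fanBasis n := by
  simp only [fanCurve, clip_eq h]

lemma fanCurve_inj {n : ℕ+} {t s : ℝ} (ht : t ∈ Icc (0:ℝ) 1) (hs : s ∈ Icc (0:ℝ) 1)
    (h : fanCurve n t = fanCurve n s) : t = s := by
  have h2 : (fanCurve n t : FanAmbient) n = (fanCurve n s : FanAmbient) n := by rw [h]
  rw [fanCurve_coe n ht, fanCurve_coe n hs, smul_basis_apply, smul_basis_apply] at h2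
  simpa using h2


lemma inv_nat_mem_Icc {k : ℕ} (hk : 0 < k) : ((k:ℝ))⁻¹ ∈ Icc (0:ℝ) 1 := by
  have hk' : (1:ℝ) ≤ (k:ℝ) := by exact_mod_cast hk
  exact ⟨inv_nonneg.2 (by positivity), inv_le_one_of_one_le₀ hk'⟩

lemma fanCurve_marked (n : ℕ+) {k : ℕ} (hk : 0 < k) :
    fanCurve n ((k:ℝ))⁻¹ ∈ FanMarked := by
  refine ⟨⟨k, hk⟩, n, ?_⟩
  rw [fanCurve_coe n (inv_nat_mem_Icc hk)]
  norm_num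

section G
variable (g : ↥MetricFan ≃ₜ ↥MetricFan) (hg : ∀ x ∈ FanMarked, g x = x) (n : ℕ+)

include hg in
lemma g_fix {k : ℕ} (hk : 0 < k) :
    g (fanCurve n ((k:ℝ))⁻¹) = fanCurve n ((k:ℝ))⁻¹ :=
  hg _ (fanCurve_marked n hk)

include hg in
lemma g_fix_zero : g fanZero = fanZero := by
  have h1 : Tendsto (fun k : ℕ => fanCurve 1 (((k:ℝ)+1))⁻¹) atTop (𝓝 fanZero) := by
    rw [IsEmbedding.subtypeVal.tendsto_nhds_iff]
    have h0 : Tendsto (fun k : ℕ => ((k:ℝ)+1)⁻¹) atTop (𝓝 0) := by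
      simpa [one_div] using tendsto_one_div_add_atTop_nhds_zero_nat (𝕜 := ℝ)
    have h2 := h0.smul_const (fanBasis 1)
    rw [zero_smul] at h2
    refine h2.congr fun k => ?_
    show _ = (fanCurve 1 ((k:ℝ)+1)⁻¹ : FanAmbient)
    rw [fanCurve_coe 1 (by exact_mod_cast inv_nat_mem_Icc (k.succ_pos))]
  have h2 := ((g.continuous.tendsto fanZero).comp h1).congr
    (fun k => by
      have := g_fix g hg 1 (k := k+1) k.succ_pos
      simpa [Function.comp] using this)
  exact tendsto_nhds_unique h2 h1

/-- the n-th coordinate of the image under `g` of the point `t·eₙ`. -/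
def gF (t : ℝ) : ℝ := ((g (fanCurve n t) : ↥MetricFan) : FanAmbient) n

lemma gF_continuous : Continuous (gF g n) :=
  (continuous_coord n).comp
    (continuous_subtype_val.comp (g.continuous.comp (continuous_fanCurve n)))

lemma gF_nonneg (t : ℝ) : 0 ≤ gF g n t := coord_nonneg (g (fanCurve n t)).2 n

lemma gF_le_one (t : ℝ) : gF g n t ≤ 1 := by
  have h1 : gF g n t ≤ ‖((g (fanCurve n t) : ↥MetricFan) : FanAmbient)‖ := by
    refine le_trans ?_ (lp.norm_apply_le_norm (by norm_num) _ n)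
    rw [Real.norm_eq_abs]; exact le_abs_self _
  exact h1.trans (norm_le_one (g (fanCurve n t)).2)

include hg in
lemma gF_fix {k : ℕ} (hk : 0 < k) : gF g n ((k:ℝ))⁻¹ = ((k:ℝ))⁻¹ := by
  rw [gF, g_fix g hg n hk, fanCurve_coe n (inv_nat_mem_Icc hk), smul_basis_apply, if_pos rfl]

lemma gF_spec {t : ℝ} (h : 0 < gF g n t) :
    ((g (fanCurve n t) : ↥MetricFan) : FanAmbient) = gF g n t • fanBasis n := by
  obtain ⟨m, s, hs, hx⟩ := mem_fan_iff.1 (g (fanCurve n t)).2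
  have hc : gF g n t = if n = m then s else 0 := by
    rw [gF, hx, smul_basis_apply]
  by_cases hnm : n = m
  · subst hnm; rw [if_pos rfl] at hc; rw [hx, hc]
  · rw [if_neg hnm] at hc; rw [hc] at h; exact absurd h (lt_irrefl 0)

include hg in
lemma gF_eq_inv_imp {t : ℝ} (ht : t ∈ Icc (0:ℝ) 1) {k : ℕ} (hk : 0 < k)
    (h : gF g n t = ((k:ℝ))⁻¹) : t = ((k:ℝ))⁻¹ := by
  have hk' : (0:ℝ) < (k:ℝ) := by exact_mod_cast hk
  have hkpos : (0:ℝ) < ((k:ℝ))⁻¹ := by positivity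
  have h2 := gF_spec g n (t := t) (h ▸ hkpos)
  rw [h] at h2
  have h3 : g (fanCurve n t) = g (fanCurve n ((k:ℝ))⁻¹) := by
    refine Subtype.ext ?_
    rw [h2, g_fix g hg n hk, fanCurve_coe n (inv_nat_mem_Icc hk)]
  exact fanCurve_inj ht (inv_nat_mem_Icc hk) (g.injective h3)

omit hg g n in
lemma inv_le_inv_of {a b : ℝ} (ha : 0 < a) (h : a ≤ b) : b⁻¹ ≤ a⁻¹ := by gcongr

omit hg g n in
lemma inv_lt_inv_of {a b : ℝ} (ha : 0 < a) (h : a < b) : b⁻¹ < a⁻¹ := by gcongr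

include hg in
lemma gF_pos {t : ℝ} (h0 : 0 < t) (h1 : t ≤ 1) : 0 < gF g n t := by
  rcases lt_or_eq_of_le (gF_nonneg g n t) with h | h
  · exact h
  set i := ⌊t⁻¹⌋₊ with hidef
  have hi1 : 1 ≤ i := Nat.le_floor (by exact_mod_cast (one_le_inv₀ h0).2 h1)
  have hipos : (0:ℝ) < (i:ℝ) := by exact_mod_cast hi1
  have hilt : t⁻¹ < (i:ℝ)+1 := Nat.lt_floor_add_one _
  have hsgt : ((i:ℝ)+1)⁻¹ < t := by
    have := inv_lt_inv_of (inv_pos.2 h0) hilt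
    rwa [inv_inv] at this
  have hsub := intermediate_value_Icc' hsgt.le ((gF_continuous g n).continuousOn)
  have hfa : gF g n (((i:ℝ)+1)⁻¹) = ((i:ℝ)+1)⁻¹ := by
    have := gF_fix g hg n (k := i+1) (by omega)
    push_cast at this ⊢; exact this
  have hmem : ((i:ℝ)+2)⁻¹ ∈ Icc (gF g n t) (gF g n (((i:ℝ)+1)⁻¹)) := by
    rw [hfa, ← h]
    exact ⟨by positivity, inv_le_inv_of (by positivity) (by linarith)⟩
  obtain ⟨t', ht'm, hft'⟩ := hsub hmem
  have ht'Icc : t' ∈ Icc (0:ℝ) 1 := by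
    constructor
    · exact le_trans (by positivity) ht'm.1
    · exact ht'm.2.trans h1
  have ht'eq : t' = ((i:ℝ)+2)⁻¹ := by
    have := gF_eq_inv_imp g hg n ht'Icc (k := i+2) (by omega)
      (by push_cast; exact hft')
    push_cast at this; exact this
  have hcontr : ((i:ℝ)+2)⁻¹ < ((i:ℝ)+1)⁻¹ := inv_lt_inv_of (by positivity) (by linarith)
  rw [ht'eq] at ht'm
  linarith [ht'm.1]

include hg in
lemma gF_bound {k : ℕ} (hk : 1 ≤ k) {t : ℝ} (h1 : ((k:ℝ)+1)⁻¹ ≤ t)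
    (h2 : t ≤ ((k:ℝ))⁻¹) : gF g n t ≤ ((k:ℝ))⁻¹ := by
  by_contra hcon
  push_neg at hcon
  have hkpos : (0:ℝ) < (k:ℝ) := by exact_mod_cast hk
  set s := gF g n t with hs
  have hs1 : s ≤ 1 := gF_le_one g n t
  have ht : t ∈ Icc (0:ℝ) 1 := by
    constructor
    · exact le_trans (by positivity) h1
    · refine h2.trans ?_
      have := inv_le_inv_of (a := (1:ℝ)) (b := (k:ℝ)) one_pos (by exact_mod_cast hk)
      simpa using this
  have hspos : 0 < s := lt_trans (by positivity) hcon
  set i := ⌊s⁻¹⌋₊ with hidef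
  have hi1 : 1 ≤ i := Nat.le_floor (by exact_mod_cast (one_le_inv₀ hspos).2 hs1)
  have hipos : (0:ℝ) < (i:ℝ) := by exact_mod_cast hi1
  have hiub : (i:ℝ) ≤ s⁻¹ := Nat.floor_le (by positivity)
  have hilt : s⁻¹ < (i:ℝ)+1 := Nat.lt_floor_add_one _
  have hsle : s ≤ ((i:ℝ))⁻¹ := by
    have := inv_le_inv_of hipos hiub
    rwa [inv_inv] at this
  have hsgt : ((i:ℝ)+1)⁻¹ < s := by
    have := inv_lt_inv_of (inv_pos.2 hspos) hilt
    rwa [inv_inv] at this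
  have hik : (i:ℝ) + 1 ≤ (k:ℝ) := by
    have hkinv : s⁻¹ < (k:ℝ) := by
      have := inv_lt_inv_of (by positivity : (0:ℝ) < ((k:ℝ))⁻¹) hcon
      rwa [inv_inv] at this
    have hik' : i < k := by exact_mod_cast lt_of_le_of_lt hiub hkinv
    exact_mod_cast hik'
  have hko : ((k:ℝ))⁻¹ ≤ ((i:ℝ)+1)⁻¹ := inv_le_inv_of (by positivity) hik
  rcases eq_or_lt_of_le hsle with heq | hlt
  · have hti := gF_eq_inv_imp g hg n ht (k := i) (by omega) heq
    have hcontr : ((i:ℝ)+1)⁻¹ < ((i:ℝ))⁻¹ := inv_lt_inv_of hipos (by linarith)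
    rw [hti] at h2
    linarith
  · have hfa : gF g n (((i:ℝ)+1)⁻¹) = ((i:ℝ)+1)⁻¹ := by
      have := gF_fix g hg n (k := i+1) (by omega)
      push_cast at this ⊢; exact this
    have hfb : gF g n (((i:ℝ))⁻¹) = ((i:ℝ))⁻¹ := gF_fix g hg n (by omega)
    have hle : ((i:ℝ)+1)⁻¹ ≤ ((i:ℝ))⁻¹ := inv_le_inv_of hipos (by linarith)
    have hsub := intermediate_value_Icc hle ((gF_continuous g n).continuousOn)
    have hmem : s ∈ Icc (gF g n (((i:ℝ)+1)⁻¹)) (gF g n (((i:ℝ))⁻¹)) := by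
      rw [hfa, hfb]; exact ⟨hsgt.le, hlt.le⟩
    obtain ⟨t', ht'm, hft'⟩ := hsub hmem
    have ht'Icc : t' ∈ Icc (0:ℝ) 1 := by
      constructor
      · exact le_trans (by positivity) ht'm.1
      · refine ht'm.2.trans ?_
        have := inv_le_inv_of (a := (1:ℝ)) (b := (i:ℝ)) one_pos (by exact_mod_cast hi1)
        simpa using this
    have e1 := gF_spec g n (t := t') (hft'.symm ▸ hspos)
    have e2 := gF_spec g n (t := t) hspos
    have heq2 : fanCurve n t' = fanCurve n t := by
      refine g.injective (Subtype.ext ?_)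
      rw [e1, e2, hft']
    have htt : t' = t := fanCurve_inj ht'Icc ht heq2
    have ht'gt : ((i:ℝ)+1)⁻¹ < t' := by
      rcases eq_or_lt_of_le ht'm.1 with h | h
      · exfalso
        rw [← h, hfa] at hft'
        rw [hft'] at hsgt
        exact lt_irrefl _ hsgt
      · exact h
    linarith

include hg in
lemma g_norm_le {x : ↥MetricFan} {j : ℕ}
    (hx : ‖(x : FanAmbient)‖ ≤ ((j:ℝ)+1)⁻¹) :
    ‖((g x : ↥MetricFan) : FanAmbient)‖ ≤ ((j:ℝ)+1)⁻¹ := by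
  obtain ⟨n, t, ht, hval⟩ := mem_fan_iff.1 x.2
  have hxt : ‖(x:FanAmbient)‖ = t := by
    rw [hval, norm_smul_basis, abs_of_nonneg ht.1]
  rw [hxt] at hx
  rcases eq_or_lt_of_le ht.1 with h0 | h0
  · have hx0 : x = fanZero := by
      refine Subtype.ext ?_
      rw [hval, ← h0, zero_smul]; rfl
    rw [hx0, g_fix_zero g hg]
    show ‖(0 : FanAmbient)‖ ≤ _
    rw [norm_zero]; positivity
  · have hxc : x = fanCurve n t := Subtype.ext (by rw [hval, fanCurve_coe n ht])
    set i := ⌊t⁻¹⌋₊ with hidef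
    have hinv : ((j:ℝ)+1) ≤ t⁻¹ := by
      have := inv_le_inv_of h0 hx
      rwa [inv_inv] at this
    have hi1 : j + 1 ≤ i := Nat.le_floor (by push_cast; exact hinv)
    have hipos : (0:ℝ) < (i:ℝ) := by
      have haux : (0:ℕ) < i := by omega
      exact_mod_cast haux
    have hiub : (i:ℝ) ≤ t⁻¹ := Nat.floor_le (by positivity)
    have hilt : t⁻¹ < (i:ℝ)+1 := Nat.lt_floor_add_one _
    have htle : t ≤ ((i:ℝ))⁻¹ := by
      have := inv_le_inv_of hipos hiub
      rwa [inv_inv] at this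
    have htgt : ((i:ℝ)+1)⁻¹ < t := by
      have := inv_lt_inv_of (inv_pos.2 h0) hilt
      rwa [inv_inv] at this
    have hpos := gF_pos g hg n h0 ht.2
    have hbd := gF_bound g hg n (k := i) (by omega) htgt.le htle
    have e := gF_spec g n (t := t) hpos
    rw [hxc, e, norm_smul_basis, abs_of_nonneg (le_of_lt hpos)]
    refine le_trans hbd (inv_le_inv_of (by positivity) ?_)
    exact_mod_cast hi1

end G

lemma exists_compact_nbhd {x₀ : ↥MetricFan} (hx0 : (x₀ : FanAmbient) ≠ 0)
    {W : Set ↥MetricFan} (hW : W ∈ 𝓝 x₀) :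
    ∃ L : Set ↥MetricFan, IsCompact L ∧ L ∈ 𝓝 x₀ ∧ L ⊆ W := by
  obtain ⟨n, t₀, ht₀, hval⟩ := mem_fan_iff.1 x₀.2
  have ht₀pos : 0 < t₀ := by
    rcases eq_or_lt_of_le ht₀.1 with h | h
    · exact absurd (by rw [hval, ← h, zero_smul]) hx0
    · exact h
  obtain ⟨r₁, hr₁, hball⟩ := Metric.mem_nhds_iff.1 hW
  set r := min (t₀/2) (r₁/2) with hrdef
  have hrpos : 0 < r := by
    apply lt_min <;> positivity
  refine ⟨fanCurve n '' Icc (t₀ - r) (t₀ + r),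
    (isCompact_Icc.image (continuous_fanCurve n)), ?_, ?_⟩
  · -- neighborhood: contains ball x₀ r
    refine Filter.mem_of_superset (Metric.ball_mem_nhds x₀ hrpos) ?_
    rintro y hy
    rw [Metric.mem_ball, Subtype.dist_eq, dist_eq_norm] at hy
    obtain ⟨m, s, hs, hyval⟩ := mem_fan_iff.1 y.2
    have hrt : r < t₀ := lt_of_le_of_lt (min_le_left _ _) (by linarith)
    by_cases hmn : m = n
    · subst hmn
      have hcoord : ((y:FanAmbient) - (x₀:FanAmbient)) m = s - t₀ := by
        have h1 : ((y:FanAmbient) - (x₀:FanAmbient)) m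
            = (y:FanAmbient) m - (x₀:FanAmbient) m := by
          rw [lp.coeFn_sub]; rfl
        rw [h1, hyval, hval, smul_basis_apply, smul_basis_apply, if_pos rfl, if_pos rfl]
      have habs : |s - t₀| < r := by
        have := lp.norm_apply_le_norm (p := 2) (by norm_num)
          ((y:FanAmbient) - (x₀:FanAmbient)) m
        rw [hcoord] at this
        rw [Real.norm_eq_abs] at this
        exact lt_of_le_of_lt this hy
      rw [abs_lt] at habs
      refine ⟨s, ⟨by linarith, by linarith⟩, ?_⟩
      exact Subtype.ext (by rw [fanCurve_coe m hs, hyval])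
    · -- different segment: distance at least t₀
      exfalso
      have hcoord : ((y:FanAmbient) - (x₀:FanAmbient)) n = -t₀ := by
        have h1 : ((y:FanAmbient) - (x₀:FanAmbient)) n
            = (y:FanAmbient) n - (x₀:FanAmbient) n := by
          rw [lp.coeFn_sub]; rfl
        rw [h1, hyval, hval, smul_basis_apply, smul_basis_apply, if_pos rfl,
          if_neg (fun h => hmn h.symm)]
        ring
      have := lp.norm_apply_le_norm (p := 2) (by norm_num)
        ((y:FanAmbient) - (x₀:FanAmbient)) n
      rw [hcoord, Real.norm_eq_abs, abs_neg, abs_of_pos ht₀pos] at this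
      linarith [lt_of_le_of_lt this hy]
  · -- contained in W via ball r₁
    rintro y ⟨s, hsm, rfl⟩
    apply hball
    rw [Metric.mem_ball, Subtype.dist_eq, dist_eq_norm]
    have hx₀curve : (x₀ : FanAmbient) = (fanCurve n t₀ : FanAmbient) := by
      rw [fanCurve_coe n ht₀, hval]
    have hnorm : ((fanCurve n s : FanAmbient)) - (x₀ : FanAmbient)
        = (clip s - t₀) • fanBasis n := by
      rw [hx₀curve]
      show clip s • fanBasis n - clip t₀ • fanBasis n = _
      rw [clip_eq ht₀, sub_smul]
    rw [hnorm, norm_smul_basis]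
    have h2 : |clip s - t₀| ≤ |s - t₀| := by
      have := clip_lipschitz s t₀
      rwa [clip_eq ht₀] at this
    have h3 : |s - t₀| ≤ r := abs_le.2 ⟨by linarith [hsm.1], by linarith [hsm.2]⟩
    have : r < r₁ := lt_of_le_of_lt (min_le_right _ _) (by linarith)
    linarith [h2.trans h3]

end MegHelper

open MegHelper Set Filter Metric Topology in
theorem stmt_12 :
    Continuous (fun p : MegGroup × ↥MetricFan =>
      (p.1 : ↥MetricFan ≃ₜ ↥MetricFan) p.2) := by
  rw [continuous_iff_continuousAt]
  rintro ⟨g₀, x₀⟩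
  have hg₀ : ∀ x ∈ FanMarked, (g₀ : ↥MetricFan ≃ₜ ↥MetricFan) x = x := g₀.2
  by_cases hx0 : (x₀ : FanAmbient) = 0
  · -- continuity at the apex, uniform over the group
    have hx₀ : x₀ = fanZero := Subtype.ext hx0
    rw [ContinuousAt]
    have hval : (g₀ : ↥MetricFan ≃ₜ ↥MetricFan) x₀ = fanZero := by
      rw [hx₀, g_fix_zero _ hg₀]
    rw [hval, Metric.tendsto_nhds]
    intro ε hε
    obtain ⟨j, hj⟩ := exists_nat_one_div_lt hε
    have hjpos : (0:ℝ) < ((j:ℝ)+1)⁻¹ := by positivity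
    have hmem : (Set.univ ×ˢ Metric.ball x₀ (((j:ℝ)+1)⁻¹) :
        Set (MegGroup × ↥MetricFan)) ∈ 𝓝 (g₀, x₀) :=
      prod_mem_nhds Filter.univ_mem (Metric.ball_mem_nhds x₀ hjpos)
    filter_upwards [hmem] with p hp
    have hp2 : dist p.2 x₀ < ((j:ℝ)+1)⁻¹ := hp.2
    have hxnorm : ‖(p.2 : FanAmbient)‖ ≤ ((j:ℝ)+1)⁻¹ := by
      rw [Subtype.dist_eq, hx0, dist_zero_right] at hp2
      exact hp2.le
    have hbd := g_norm_le (p.1 : ↥MetricFan ≃ₜ ↥MetricFan) p.1.2 hxnorm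
    rw [Subtype.dist_eq]
    show dist (((p.1 : ↥MetricFan ≃ₜ ↥MetricFan) p.2 : ↥MetricFan) : FanAmbient)
      (0 : FanAmbient) < ε
    rw [dist_zero_right]
    refine lt_of_le_of_lt hbd ?_
    rw [one_div] at hj
    exact_mod_cast hj
  · -- continuity away from the apex, via local compactness
    rw [ContinuousAt, (nhds_basis_opens _).tendsto_right_iff]
    rintro U ⟨hUx, hUo⟩
    have hW : (g₀ : ↥MetricFan ≃ₜ ↥MetricFan) ⁻¹' U ∈ 𝓝 x₀ :=
      (g₀ : ↥MetricFan ≃ₜ ↥MetricFan).continuous.continuousAt (hUo.mem_nhds hUx)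
    obtain ⟨L, hLc, hLn, hLW⟩ := exists_compact_nbhd hx0 hW
    have hmaps : Set.MapsTo
        (toContinuousMap (g₀ : ↥MetricFan ≃ₜ ↥MetricFan)) L U :=
      fun x hx => hLW hx
    have hev := ContinuousMap.eventually_mapsTo hLc hUo hmaps
    have hcont : Continuous
        (fun g : MegGroup => toContinuousMap (g : ↥MetricFan ≃ₜ ↥MetricFan)) :=
      continuous_induced_dom
    have hev' : ∀ᶠ g : MegGroup in 𝓝 g₀,
        Set.MapsTo (toContinuousMap (g : ↥MetricFan ≃ₜ ↥MetricFan)) L U :=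
      (hcont.tendsto g₀).eventually hev
    filter_upwards [prod_mem_nhds hev' hLn] with p hp
    exact hp.1 hp.2
end
end

section
/- Let M be the metric fan and G the Megrelishvili group with the compact-open topology, acting on M by evaluation. If f : M → ℝ is a bounded continuous function that is π-uniform for this action, then f(eₙ) converges to f(0) as n → ∞. -/
noncomputable section

open Filter Set TopologicalSpace
open scoped ENNReal NNReal

namespace FanAux

/-! ### Compact-open extraction -/

lemma mem_nhds_compactOpen_fix {X : Type*} [TopologicalSpace X] {f : C(X,X)} {W : Set C(X,X)}
    (hW : W ∈ nhds f) :
    ∃ K : Set X, IsCompact K ∧ ∀ g : C(X,X), (∀ x ∈ K, g x = f x) → g ∈ W := by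
  rw [ContinuousMap.nhds_compactOpen] at hW
  obtain ⟨I, hIfin, V, hV, hVuniv, -, hWeq⟩ := Filter.mem_iInf'.1 hW
  classical
  refine ⟨⋃₀ {K ∈ I | IsCompact K}, ?_, ?_⟩
  · exact (hIfin.subset (sep_subset _ _)).isCompact_sUnion (fun K hK => hK.2)
  · intro g hg
    rw [hWeq]
    refine mem_iInter.2 fun K => ?_
    by_cases hKI : K ∈ I
    swap
    · simp [hVuniv K hKI]
    have hVK := hV K
    by_cases hKc : IsCompact K
    swap
    · rw [iInf_neg hKc, Filter.mem_top] at hVK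
      simp [hVK]
    rw [iInf_pos hKc] at hVK
    obtain ⟨J, hJfin, Vu, hVu, hVuuniv, -, hVKeq⟩ := Filter.mem_iInf'.1 hVK
    rw [hVKeq]
    refine mem_iInter.2 fun U => ?_
    have hVuU := hVu U
    by_cases hU : IsOpen U
    swap
    · rw [iInf_neg hU, Filter.mem_top] at hVuU; simp [hVuU]
    rw [iInf_pos hU] at hVuU
    by_cases hm : MapsTo f K U
    swap
    · rw [iInf_neg hm, Filter.mem_top] at hVuU; simp [hVuU]
    rw [iInf_pos hm, Filter.mem_principal] at hVuU
    refine hVuU ?_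
    intro x hx
    have : x ∈ ⋃₀ {K ∈ I | IsCompact K} := ⟨K, ⟨hKI, hKc⟩, hx⟩
    show g x ∈ U
    rw [hg x this]
    exact hm hx

/-! ### Basic facts about the fan -/

lemma fan_ev_lipschitz (m : ℕ+) : LipschitzWith 1 (fun y : FanAmbient => y m) := by
  intro y z
  rw [ENNReal.coe_one, one_mul, edist_dist, edist_dist]
  apply ENNReal.ofReal_le_ofReal
  rw [dist_eq_norm, dist_eq_norm]
  have := lp.norm_apply_le_norm (by norm_num : (2:ℝ≥0∞) ≠ 0) (y - z) m
  simpa [lp.coeFn_sub] using this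

lemma fan_ev_continuous (m : ℕ+) : Continuous (fun y : FanAmbient => y m) :=
  (fan_ev_lipschitz m).continuous

lemma ev_smul_single (t : ℝ) (n m : ℕ+) :
    (t • fanBasis n) m = if m = n then t else 0 := by
  rw [lp.coeFn_smul]
  simp only [Pi.smul_apply, fanBasis, lp.single_apply]
  by_cases h : m = n <;> simp [h]

lemma norm_smul_fanBasis (t : ℝ) (n : ℕ+) : ‖t • fanBasis n‖ = |t| := by
  rw [norm_smul, Real.norm_eq_abs]
  have : ‖fanBasis n‖ = 1 := by
    have := lp.norm_single (p := 2) (E := fun _ : ℕ+ => ℝ) (by norm_num) n (1:ℝ)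
    simpa [fanBasis] using this
  rw [this, mul_one]

lemma mem_fan_iff {x : FanAmbient} :
    x ∈ MetricFan ↔ ∃ n : ℕ+, ∃ t : ℝ, 0 ≤ t ∧ t ≤ 1 ∧ x = t • fanBasis n := by
  simp only [MetricFan, mem_iUnion, segment_eq_image, smul_zero, mem_image]
  constructor
  · rintro ⟨n, t, ht, hx⟩
    exact ⟨n, t, ht.1, ht.2, by simpa using hx.symm⟩
  · rintro ⟨n, t, h0, h1, hx⟩
    exact ⟨n, t, ⟨h0, h1⟩, by simpa using hx.symm⟩

lemma smul_fanBasis_mem (n : ℕ+) {t : ℝ} (h0 : 0 ≤ t) (h1 : t ≤ 1) :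
    t • fanBasis n ∈ MetricFan :=
  mem_fan_iff.2 ⟨n, t, h0, h1, rfl⟩

lemma dist_spokes {n m : ℕ+} (hnm : n ≠ m) (t s : ℝ) :
    t ≤ dist (t • fanBasis n) (s • fanBasis m) := by
  rw [dist_eq_norm]
  have h := lp.norm_apply_le_norm (by norm_num : (2:ℝ≥0∞) ≠ 0)
    (t • fanBasis n - s • fanBasis m) n
  have hev : (t • fanBasis n - s • fanBasis m) n = t := by
    rw [lp.coeFn_sub]
    simp only [Pi.sub_apply, ev_smul_single]
    rw [if_neg hnm, sub_zero, if_pos trivial]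
  rw [hev, Real.norm_eq_abs] at h
  exact (le_abs_self t).trans h

set_option maxHeartbeats 1000000 in
set_option synthInstance.maxHeartbeats 400000 in
/-- A compact set only reaches level `c` on finitely many spokes. -/
lemma spokes_bound {K : Set FanAmbient} (hK : IsCompact K) {c : ℝ} (hc : 0 < c) :
    ∃ N : ℕ+, ∀ n : ℕ+, N ≤ n → ∀ t : ℝ, c ≤ t → t ≤ 1 → t • fanBasis n ∉ K := by
  classical
  set S := {n : ℕ+ | ∃ t : ℝ, c ≤ t ∧ t ≤ 1 ∧ t • fanBasis n ∈ K} with hS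
  have hSfin : S.Finite := by
    by_contra hinf
    set u := Set.Infinite.natEmbedding S hinf with hu
    have hprop : ∀ i : ℕ, ∃ t : ℝ, c ≤ t ∧ t ≤ 1 ∧ t • fanBasis ((u i : ↥S) : ℕ+) ∈ K :=
      fun i => (u i).2
    choose t ht1 ht2 ht3 using hprop
    obtain ⟨a, -, φ, hφ, hconv⟩ :=
      hK.tendsto_subseq (x := fun i => t i • fanBasis ((u i : ↥S) : ℕ+)) ht3
    have hcauchy := hconv.cauchySeq
    rw [Metric.cauchySeq_iff] at hcauchy
    obtain ⟨M, hM⟩ := hcauchy c hc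
    have hlt := hM (M+1) (by omega) M le_rfl
    have hne : ((u (φ (M+1)) : ↥S) : ℕ+) ≠ ((u (φ M) : ↥S) : ℕ+) := by
      intro h
      have : u (φ (M+1)) = u (φ M) := Subtype.ext h
      have := u.injective this
      have hmono := hφ (show M < M + 1 by omega)
      omega
    have hge : c ≤ dist (t (φ (M+1)) • fanBasis ((u (φ (M+1)) : ↥S) : ℕ+))
        (t (φ M) • fanBasis ((u (φ M) : ↥S) : ℕ+)) :=
      (ht1 _).trans (dist_spokes hne _ _)
    simp only [Function.comp_apply] at hlt
    exact absurd hlt (not_lt.2 hge)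
  obtain ⟨b, hb⟩ := hSfin.bddAbove
  refine ⟨b + 1, fun n hn t htc ht1 htK => ?_⟩
  have : n ∈ S := ⟨t, htc, ht1, htK⟩
  have := hb this
  have h2 : b + 1 ≤ b := hn.trans this
  exact absurd h2 (not_le.2 (PNat.lt_add_one_iff.2 le_rfl))

end FanAux

namespace FanAux

/-! ### Piecewise-linear homeomorphisms of `ℝ` -/

/-- The hat function, zero outside `[p,q]`. -/
def fanHat (p q t : ℝ) : ℝ := max 0 (min (t - p) (q - t))

lemma fanHat_of_le {p q t : ℝ} (h : t ≤ p) : fanHat p q t = 0 := by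
  apply max_eq_left
  exact (min_le_left _ _).trans (by linarith)

lemma fanHat_of_ge {p q t : ℝ} (h : q ≤ t) : fanHat p q t = 0 := by
  apply max_eq_left
  exact (min_le_right _ _).trans (by linarith)

lemma fanHat_lipschitz (p q : ℝ) : ∀ s t : ℝ, |fanHat p q s - fanHat p q t| ≤ |s - t| := by
  intro s t
  unfold fanHat
  have h1 : |max 0 (min (s - p) (q - s)) - max 0 (min (t - p) (q - t))| ≤
      |min (s - p) (q - s) - min (t - p) (q - t)| := by
    rw [max_comm 0 _, max_comm 0 _]
    exact abs_max_sub_max_le_abs _ _ _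
  refine h1.trans ?_
  refine (abs_min_sub_min_le_max _ _ _ _).trans ?_
  apply max_le
  · have : (s - p) - (t - p) = s - t := by ring
    rw [this]
  · have : (q - s) - (q - t) = -(s - t) := by ring
    rw [this, abs_neg]

def fanPhi (p q lam t : ℝ) : ℝ := t + lam * fanHat p q t

lemma fanPhi_strictMono {p q lam : ℝ} (hl : |lam| < 1) : StrictMono (fanPhi p q lam) := by
  intro s t hst
  unfold fanPhi
  have h := fanHat_lipschitz p q t s
  have h2 : |lam * fanHat p q t - lam * fanHat p q s| ≤ |lam| * |t - s| := by
    rw [← mul_sub, abs_mul]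
    exact mul_le_mul_of_nonneg_left h (abs_nonneg _)
  have h3 : |lam| * |t - s| < |t - s| := by
    have : 0 < |t - s| := abs_pos.2 (by linarith)
    calc |lam| * |t - s| < 1 * |t - s| := by exact mul_lt_mul_of_pos_right hl this
    _ = |t - s| := one_mul _
  have h4 : |t - s| = t - s := abs_of_pos (by linarith)
  have := (abs_le.1 h2).1
  nlinarith [h2, h3]

lemma fanPhi_surjective (p q : ℝ) {lam : ℝ} (hl : |lam| < 1) :
    Function.Surjective (fanPhi p q lam) := by
  intro y
  have hcont : Continuous (fanPhi p q lam) := by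
    unfold fanPhi fanHat
    fun_prop
  have ha : fanPhi p q lam (min y p - 1) = min y p - 1 := by
    unfold fanPhi
    rw [fanHat_of_le (by have := min_le_right y p; linarith)]
    ring
  have hb : fanPhi p q lam (max y q) = max y q := by
    unfold fanPhi
    rw [fanHat_of_ge (le_max_right y q)]
    ring
  have h1 : fanPhi p q lam (min y p - 1) ≤ y := by rw [ha]; have := min_le_left y p; linarith
  have h2 : y ≤ fanPhi p q lam (max y q) := by rw [hb]; exact le_max_left y q
  have := intermediate_value_Icc
    (by nlinarith [le_max_left y q, min_le_left y p] : min y p - 1 ≤ max y q) hcont.continuousOn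
  obtain ⟨t, -, ht⟩ := this ⟨h1, h2⟩
  exact ⟨t, ht⟩

/-- `fanPhi` as an order isomorphism of `ℝ`. -/
def fanPhiIso (p q lam : ℝ) (hl : |lam| < 1) : ℝ ≃o ℝ :=
  StrictMono.orderIsoOfSurjective (fanPhi p q lam) (fanPhi_strictMono hl)
    (fanPhi_surjective p q hl)

lemma fanPhi_fix {p q lam t : ℝ} (h : t ≤ p ∨ q ≤ t) : fanPhi p q lam t = t := by
  unfold fanPhi
  rcases h with h | h
  · rw [fanHat_of_le h]; ring
  · rw [fanHat_of_ge h]; ring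

lemma fanPhi_mid {p q lam : ℝ} (hpq : p < q) :
    fanPhi p q lam ((p + q) / 2) = (p + q) / 2 + lam * ((q - p) / 2) := by
  unfold fanPhi fanHat
  have h1 : min ((p + q) / 2 - p) (q - (p + q) / 2) = (q - p) / 2 := by
    have : (p + q) / 2 - p = (q - p) / 2 := by ring
    have h2 : q - (p + q) / 2 = (q - p) / 2 := by ring
    rw [this, h2, min_self]
  rw [h1, max_eq_right (by linarith)]

/-! ### Spoke homeomorphisms of the fan -/

/-- Modify the fan along the `n`-th spoke using `ψ`. -/
def spokeMapAux (n : ℕ+) (ψ : ℝ → ℝ) (y : FanAmbient) : FanAmbient :=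
  y + (ψ (y n) - y n) • fanBasis n

lemma spokeMapAux_smul {ψ : ℝ → ℝ} (hψ0 : ψ 0 = 0) (n m : ℕ+) (t : ℝ) :
    spokeMapAux n ψ (t • fanBasis m) = (if m = n then ψ t else t) • fanBasis m := by
  unfold spokeMapAux
  by_cases h : m = n
  · subst h
    rw [if_pos rfl]
    have hev : (t • fanBasis m) m = t := by rw [ev_smul_single, if_pos rfl]
    rw [hev, ← add_smul]
    congr 1
    ring
  · rw [if_neg h]
    have hev : (t • fanBasis m) n = 0 := by
      rw [ev_smul_single, if_neg (fun hh => h hh.symm)]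
    rw [hev, hψ0, sub_zero, zero_smul, add_zero]

lemma spokeMapAux_continuous (n : ℕ+) {ψ : ℝ → ℝ} (hψ : Continuous ψ) :
    Continuous (spokeMapAux n ψ) := by
  unfold spokeMapAux
  exact continuous_id.add
    (((hψ.comp (fan_ev_continuous n)).sub (fan_ev_continuous n)).smul continuous_const)

lemma spokeMapAux_mem (n : ℕ+) {ψ : ℝ → ℝ} (hψ0 : ψ 0 = 0)
    (hψI : ∀ t, 0 ≤ t → t ≤ 1 → 0 ≤ ψ t ∧ ψ t ≤ 1) {x : FanAmbient} (hx : x ∈ MetricFan) :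
    spokeMapAux n ψ x ∈ MetricFan := by
  obtain ⟨m, t, h0, h1, rfl⟩ := mem_fan_iff.1 hx
  rw [spokeMapAux_smul hψ0]
  by_cases h : m = n
  · rw [if_pos h]
    exact smul_fanBasis_mem m (hψI t h0 h1).1 (hψI t h0 h1).2
  · rw [if_neg h]
    exact smul_fanBasis_mem m h0 h1

/-- The homeomorphism of the fan induced by a homeomorphism `ψ` of the interval
on the `n`-th spoke. -/
def spokeHomeo (n : ℕ+) (ψ χ : ℝ → ℝ) (hψ : Continuous ψ) (hχ : Continuous χ)
    (hψ0 : ψ 0 = 0) (hχ0 : χ 0 = 0)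
    (hψI : ∀ t, 0 ≤ t → t ≤ 1 → 0 ≤ ψ t ∧ ψ t ≤ 1)
    (hχI : ∀ t, 0 ≤ t → t ≤ 1 → 0 ≤ χ t ∧ χ t ≤ 1)
    (hχψ : ∀ t, χ (ψ t) = t) (hψχ : ∀ t, ψ (χ t) = t) :
    ↥MetricFan ≃ₜ ↥MetricFan where
  toFun x := ⟨spokeMapAux n ψ x, spokeMapAux_mem n hψ0 hψI x.2⟩
  invFun x := ⟨spokeMapAux n χ x, spokeMapAux_mem n hχ0 hχI x.2⟩
  left_inv x := by
    apply Subtype.ext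
    obtain ⟨m, t, h0, h1, hx⟩ := mem_fan_iff.1 x.2
    show spokeMapAux n χ (spokeMapAux n ψ x) = x
    conv_lhs => rw [hx]
    rw [spokeMapAux_smul hψ0]
    by_cases h : m = n
    · rw [if_pos h, spokeMapAux_smul hχ0, if_pos h, hχψ, ← hx]
    · rw [if_neg h, spokeMapAux_smul hχ0, if_neg h, ← hx]
  right_inv x := by
    apply Subtype.ext
    obtain ⟨m, t, h0, h1, hx⟩ := mem_fan_iff.1 x.2
    show spokeMapAux n ψ (spokeMapAux n χ x) = x
    conv_lhs => rw [hx]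
    rw [spokeMapAux_smul hχ0]
    by_cases h : m = n
    · rw [if_pos h, spokeMapAux_smul hψ0, if_pos h, hψχ, ← hx]
    · rw [if_neg h, spokeMapAux_smul hψ0, if_neg h, ← hx]
  continuous_toFun := by
    apply Continuous.subtype_mk
    exact (spokeMapAux_continuous n hψ).comp continuous_subtype_val
  continuous_invFun := by
    apply Continuous.subtype_mk
    exact (spokeMapAux_continuous n hχ).comp continuous_subtype_val

lemma spokeHomeo_apply_of_eq (n : ℕ+) (ψ χ : ℝ → ℝ) (hψ : Continuous ψ) (hχ : Continuous χ)
    (hψ0 : ψ 0 = 0) (hχ0 : χ 0 = 0) (hψI) (hχI) (hχψ) (hψχ)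
    {x : ↥MetricFan} {t : ℝ} (h0 : 0 ≤ t) (h1 : t ≤ 1)
    (hx : (x : FanAmbient) = t • fanBasis n) :
    ((spokeHomeo n ψ χ hψ hχ hψ0 hχ0 hψI hχI hχψ hψχ x : ↥MetricFan) : FanAmbient)
      = ψ t • fanBasis n := by
  show spokeMapAux n ψ (x : FanAmbient) = ψ t • fanBasis n
  rw [hx, spokeMapAux_smul hψ0, if_pos rfl]

lemma spokeHomeo_apply_of_ne (n m : ℕ+) (ψ χ : ℝ → ℝ) (hψ : Continuous ψ) (hχ : Continuous χ)
    (hψ0 : ψ 0 = 0) (hχ0 : χ 0 = 0) (hψI) (hχI) (hχψ) (hψχ)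
    {x : ↥MetricFan} {t : ℝ} (hmn : m ≠ n)
    (hx : (x : FanAmbient) = t • fanBasis m) :
    spokeHomeo n ψ χ hψ hχ hψ0 hχ0 hψI hχI hχψ hψχ x = x := by
  apply Subtype.ext
  show spokeMapAux n ψ (x : FanAmbient) = (x : FanAmbient)
  rw [hx, spokeMapAux_smul hψ0, if_neg hmn]

end FanAux

namespace FanAux

/-- A clamped point on the `n`-th spoke. -/
def fanPt (n : ℕ+) (t : ℝ) : ↥MetricFan :=
  ⟨(max 0 (min t 1)) • fanBasis n,
    smul_fanBasis_mem n (le_max_left 0 _) (max_le (by norm_num) (min_le_right t 1))⟩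

lemma fanPt_continuous (n : ℕ+) : Continuous (fanPt n) := by
  apply Continuous.subtype_mk
  exact (continuous_const.max (continuous_id.min continuous_const)).smul continuous_const

lemma fanPt_val (n : ℕ+) {t : ℝ} (h0 : 0 ≤ t) (h1 : t ≤ 1) :
    (fanPt n t : FanAmbient) = t • fanBasis n := by
  show (max 0 (min t 1)) • fanBasis n = t • fanBasis n
  rw [min_eq_left h1, max_eq_right h0]

lemma fanPoint_eq_fanPt (n : ℕ+) : fanPoint n = fanPt n 1 := by
  apply Subtype.ext
  rw [fanPt_val n zero_le_one le_rfl]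
  show fanBasis n = (1:ℝ) • fanBasis n
  rw [one_smul]

end FanAux

namespace FanAux

lemma pnat_inv_not_mem {j : ℕ} (hj : 1 ≤ j) (k' : ℕ+) :
    ((k' : ℝ))⁻¹ ≤ ((j:ℝ)+1)⁻¹ ∨ ((j:ℝ))⁻¹ ≤ ((k' : ℝ))⁻¹ := by
  have hk'pos : (0:ℝ) < (k' : ℝ) := by exact_mod_cast k'.pos
  by_cases h : (k' : ℕ) ≤ j
  · right
    have : ((k':ℕ):ℝ) ≤ (j:ℝ) := Nat.cast_le.2 h
    have hcast : ((k':ℕ+):ℝ) = ((k':ℕ):ℝ) := rfl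
    rw [hcast]
    apply inv_anti₀ hk'pos
    exact this
  · left
    push_neg at h
    have : (j:ℝ) + 1 ≤ ((k':ℕ):ℝ) := by exact_mod_cast h
    have hcast : ((k':ℕ+):ℝ) = ((k':ℕ):ℝ) := rfl
    rw [hcast]
    apply inv_anti₀ (by positivity)
    exact this

set_option maxHeartbeats 1000000 in
lemma osc_step (f : ↥MetricFan → ℝ) (hc : Continuous f) {ε : ℝ} (hε : 0 < ε)
    {V : Set MegGroup}
    (hV2 : ∀ x : ↥MetricFan, ∀ v ∈ V, |f x - f ((v : ↥MetricFan ≃ₜ ↥MetricFan) x)| < ε)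
    {K : Set ↥MetricFan}
    (hVin : ∀ v : MegGroup, (∀ x ∈ K, (v : ↥MetricFan ≃ₜ ↥MetricFan) x = x) → v ∈ V)
    {n : ℕ+} {c : ℝ}
    (hKn : ∀ t : ℝ, c ≤ t → t ≤ 1 → ∀ x ∈ K, (x : FanAmbient) ≠ t • fanBasis n)
    {j : ℕ} (hj : 1 ≤ j)
    (hcp : c ≤ ((j:ℝ)+1)⁻¹) :
    |f (fanPt n ((j:ℝ))⁻¹) - f (fanPt n (((j:ℝ)+1))⁻¹)| ≤ 2*ε := by
  set p : ℝ := ((j:ℝ)+1)⁻¹ with hpdef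
  set q : ℝ := ((j:ℝ))⁻¹ with hqdef
  have hjR : (1:ℝ) ≤ (j:ℝ) := by exact_mod_cast hj
  have hp : 0 < p := by positivity
  have hq0 : 0 < q := by positivity
  have hpq : p < q := by
    rw [hpdef, hqdef]
    apply inv_strictAnti₀ (by positivity)
    linarith
  have hq1 : q ≤ 1 := by
    rw [hqdef]
    rw [inv_le_one_iff₀]
    right; exact hjR
  set μ : ℝ := (p + q) / 2 with hμdef
  have hμ1 : p < μ := by rw [hμdef]; linarith
  have hμ2 : μ < q := by rw [hμdef]; linarith
  -- Step A: oscillation within the open interval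
  have hosc : ∀ u ∈ Set.Ioo p q, |f (fanPt n μ) - f (fanPt n u)| < ε := by
    intro u hu
    set lam : ℝ := (2*u - (p+q))/(q-p) with hlamdef
    have hqp : 0 < q - p := by linarith
    have hl : |lam| < 1 := by
      rw [abs_lt, hlamdef]
      constructor
      · rw [lt_div_iff₀ hqp]
        have := hu.1; nlinarith [hu.1]
      · rw [div_lt_iff₀ hqp]
        nlinarith [hu.2]
    set ψ : ℝ → ℝ := fanPhi p q lam with hψdef
    set iso : ℝ ≃o ℝ := fanPhiIso p q lam hl with hisodef
    have hiso : (iso : ℝ → ℝ) = ψ :=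
      StrictMono.coe_orderIsoOfSurjective _ _ _
    set χ : ℝ → ℝ := ⇑iso.symm with hχdef
    have hψcont : Continuous ψ := by
      rw [hψdef]; unfold fanPhi fanHat; fun_prop
    have hχcont : Continuous χ := by
      rw [hχdef]
      exact (OrderIso.toHomeomorph iso.symm).continuous
    have hχψ : ∀ t, χ (ψ t) = t := by
      intro t; rw [hχdef, ← hiso]; exact iso.symm_apply_apply t
    have hψχ : ∀ t, ψ (χ t) = t := by
      intro t; rw [hχdef, ← hiso]; exact iso.apply_symm_apply t
    have hψ0 : ψ 0 = 0 := fanPhi_fix (Or.inl hp.le)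
    have hψ1 : ψ 1 = 1 := fanPhi_fix (Or.inr hq1)
    have hψmono : Monotone ψ := (fanPhi_strictMono hl).monotone
    have hψI : ∀ t, 0 ≤ t → t ≤ 1 → 0 ≤ ψ t ∧ ψ t ≤ 1 := by
      intro t h0 h1
      constructor
      · rw [← hψ0]; exact hψmono h0
      · rw [← hψ1]; exact hψmono h1
    have hχ0 : χ 0 = 0 := by conv_lhs => rw [← hψ0]
                             rw [hχψ]
    have hχ1 : χ 1 = 1 := by conv_lhs => rw [← hψ1]
                             rw [hχψ]
    have hχmono : Monotone χ := iso.symm.monotone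
    have hχI : ∀ t, 0 ≤ t → t ≤ 1 → 0 ≤ χ t ∧ χ t ≤ 1 := by
      intro t h0 h1
      constructor
      · rw [← hχ0]; exact hχmono h0
      · rw [← hχ1]; exact hχmono h1
    set g : ↥MetricFan ≃ₜ ↥MetricFan :=
      spokeHomeo n ψ χ hψcont hχcont hψ0 hχ0 hψI hχI hχψ hψχ with hgdef
    have hgMeg : g ∈ MegGroup := by
      intro x hx
      obtain ⟨k', m, hx⟩ := hx
      have hk'0 : (0:ℝ) < ((k':ℕ+):ℝ) := by exact_mod_cast k'.pos
      have hk'1 : ((k':ℕ+):ℝ)⁻¹ ≤ 1 := by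
        rw [inv_le_one_iff₀]; right; exact_mod_cast k'.one_le
      by_cases h : m = n
      · rw [h] at hx
        apply Subtype.ext
        rw [hgdef, spokeHomeo_apply_of_eq n ψ χ hψcont hχcont hψ0 hχ0 hψI hχI hχψ hψχ
          (by positivity) hk'1 hx, hx]
        congr 1
        exact fanPhi_fix (pnat_inv_not_mem hj k')
      · rw [hgdef, spokeHomeo_apply_of_ne n m ψ χ hψcont hχcont hψ0 hχ0 hψI hχI hχψ hψχ h hx]
    set v : MegGroup := ⟨g, hgMeg⟩ with hvdef
    have hvfix : ∀ x ∈ K, (v : ↥MetricFan ≃ₜ ↥MetricFan) x = x := by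
      intro x hxK
      obtain ⟨m, t, h0, h1, hx⟩ := mem_fan_iff.1 x.2
      by_cases h : m = n
      · rw [h] at hx
        have htc : t < c := by
          by_contra hcon
          push_neg at hcon
          exact hKn t hcon h1 x hxK hx
        apply Subtype.ext
        rw [hvdef]
        show ((g x : ↥MetricFan) : FanAmbient) = x
        rw [spokeHomeo_apply_of_eq n ψ χ hψcont hχcont hψ0 hχ0 hψI hχI hχψ hψχ h0 h1 hx, hx]
        congr 1
        exact fanPhi_fix (Or.inl (le_trans htc.le hcp))
      · apply Subtype.ext
        rw [hvdef]
        show ((g x : ↥MetricFan) : FanAmbient) = x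
        rw [spokeHomeo_apply_of_ne n m ψ χ hψcont hχcont hψ0 hχ0 hψI hχI hχψ hψχ h hx]
    have hvV : v ∈ V := hVin v hvfix
    have happ : (v : ↥MetricFan ≃ₜ ↥MetricFan) (fanPt n μ) = fanPt n u := by
      apply Subtype.ext
      show ((g (fanPt n μ) : ↥MetricFan) : FanAmbient) = (fanPt n u : FanAmbient)
      rw [spokeHomeo_apply_of_eq n ψ χ hψcont hχcont hψ0 hχ0 hψI hχI hχψ hψχ
        (by linarith : (0:ℝ) ≤ μ) (by linarith : μ ≤ 1)
        (fanPt_val n (by linarith) (by linarith)),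
        fanPt_val n (by linarith [hu.1, hu.2] : (0:ℝ) ≤ u)
          (by linarith [hu.2] : u ≤ 1)]
      congr 1
      rw [hψdef, hμdef, fanPhi_mid hpq, hlamdef]
      field_simp
      ring
    have := hV2 (fanPt n μ) v hvV
    rwa [happ] at this
  -- Step B: pass to the endpoints
  have hcontPt : Continuous (fun u : ℝ => |f (fanPt n μ) - f (fanPt n u)|) :=
    (continuous_const.sub (hc.comp (fanPt_continuous n))).abs
  have hend : ∀ e : ℝ, e ∈ Set.Icc p q → |f (fanPt n μ) - f (fanPt n e)| ≤ ε := by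
    intro e he
    have hclos : e ∈ closure (Set.Ioo p q) := by
      rw [closure_Ioo hpq.ne]; exact he
    have hNeBot : (nhdsWithin e (Set.Ioo p q)).NeBot :=
      mem_closure_iff_nhdsWithin_neBot.1 hclos
    have hT : Filter.Tendsto (fun u : ℝ => |f (fanPt n μ) - f (fanPt n u)|)
        (nhdsWithin e (Set.Ioo p q)) (nhds (|f (fanPt n μ) - f (fanPt n e)|)) :=
      (hcontPt.tendsto e).mono_left nhdsWithin_le_nhds
    refine le_of_tendsto hT ?_
    filter_upwards [self_mem_nhdsWithin] with u hu
    exact (hosc u hu).le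
  have h1 := hend p (Set.left_mem_Icc.2 hpq.le)
  have h2 := hend q (Set.right_mem_Icc.2 hpq.le)
  calc |f (fanPt n q) - f (fanPt n p)|
      ≤ |f (fanPt n q) - f (fanPt n μ)| + |f (fanPt n μ) - f (fanPt n p)| :=
        abs_sub_le _ _ _
    _ = |f (fanPt n μ) - f (fanPt n q)| + |f (fanPt n μ) - f (fanPt n p)| := by
        rw [abs_sub_comm (f (fanPt n q))]
    _ ≤ ε + ε := add_le_add h2 h1
    _ = 2*ε := by ring

end FanAux

open FanAux Filter Set in
set_option maxHeartbeats 1000000 in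
theorem stmt_13 (f : ↥MetricFan → ℝ) (hc : Continuous f)
    (hb : ∃ C : ℝ, ∀ x : ↥MetricFan, |f x| ≤ C)
    (hu : ∀ ε : ℝ, 0 < ε → ∃ V ∈ nhds (1 : MegGroup), ∀ x : ↥MetricFan, ∀ v ∈ V,
      |f x - f ((v : ↥MetricFan ≃ₜ ↥MetricFan) x)| < ε) :
    Filter.Tendsto (fun n : ℕ+ => f (fanPoint n)) Filter.atTop (nhds (f fanZero)) := by
  rw [Metric.tendsto_atTop]
  intro η hη
  obtain ⟨δ, hδ0, hδ⟩ := Metric.continuous_iff.1 hc fanZero (η/2) (by linarith)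
  obtain ⟨k0, hk0⟩ := exists_nat_gt (1/δ)
  set k : ℕ := k0 + 1 with hkdef
  have hk1 : 1 ≤ k := by omega
  have hkR : (0:ℝ) < (k:ℝ) := by
    have : (1:ℝ) ≤ (k:ℝ) := by exact_mod_cast hk1
    linarith
  have hkδ : ((k:ℝ))⁻¹ < δ := by
    have h1 : 1/δ < (k:ℝ) := by
      rw [hkdef]; push_cast; linarith
    rw [inv_lt_comm₀ hkR hδ0]
    rwa [one_div] at h1
  set ε : ℝ := η / (4*(k:ℝ)) with hεdef
  have h4k : (0:ℝ) < 4*(k:ℝ) := by linarith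
  have hε : 0 < ε := div_pos hη h4k
  obtain ⟨V, hV1, hV2⟩ := hu ε hε
  obtain ⟨W, hW1, hW2⟩ := (mem_nhds_induced
    (fun g : MegGroup => toContinuousMap (g : ↥MetricFan ≃ₜ ↥MetricFan)) 1 V).1 hV1
  obtain ⟨K, hKc, hKfix⟩ := FanAux.mem_nhds_compactOpen_fix hW1
  have hVin : ∀ v : MegGroup, (∀ x ∈ K, (v : ↥MetricFan ≃ₜ ↥MetricFan) x = x) → v ∈ V := by
    intro v hv
    apply hW2
    show toContinuousMap (v : ↥MetricFan ≃ₜ ↥MetricFan) ∈ W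
    apply hKfix
    intro x hx
    exact hv x hx
  have hK'c : IsCompact (Subtype.val '' K) := hKc.image continuous_subtype_val
  have hcpos : (0:ℝ) < ((k:ℝ))⁻¹ := by positivity
  obtain ⟨N, hN⟩ := FanAux.spokes_bound hK'c hcpos
  refine ⟨N, fun n hn => ?_⟩
  have hKn : ∀ t : ℝ, ((k:ℝ))⁻¹ ≤ t → t ≤ 1 → ∀ x ∈ K, (x : FanAmbient) ≠ t • fanBasis n := by
    intro t htc ht1 x hxK hx
    exact hN n hn t htc ht1 ⟨x, hxK, hx⟩
  have chain : ∀ j : ℕ, 1 ≤ j → j ≤ k →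
      |f (fanPt n 1) - f (fanPt n (((j:ℕ):ℝ))⁻¹)| ≤ 2*ε*(((j:ℕ):ℝ)-1) := by
    intro j hj1
    induction j, hj1 using Nat.le_induction with
    | base =>
      intro _
      norm_num
    | succ j hj ih =>
      intro hjk
      have hstep := osc_step f hc hε hV2 hVin hKn hj
        (by
          apply inv_anti₀ (by positivity)
          have : ((j:ℝ)+1) ≤ (k:ℝ) := by exact_mod_cast hjk
          exact this)
      have hih := ih (by omega)
      have hcast : (((j+1:ℕ)):ℝ) = (j:ℝ) + 1 := by push_cast; ring
      rw [hcast]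
      have htri : |f (fanPt n 1) - f (fanPt n (((j:ℝ)+1))⁻¹)| ≤
          |f (fanPt n 1) - f (fanPt n ((j:ℝ))⁻¹)| +
          |f (fanPt n ((j:ℝ))⁻¹) - f (fanPt n (((j:ℝ)+1))⁻¹)| := abs_sub_le _ _ _
      have : (0:ℝ) < ε := hε
      have hjR : (1:ℝ) ≤ (j:ℝ) := by exact_mod_cast hj
      calc |f (fanPt n 1) - f (fanPt n (((j:ℝ)+1))⁻¹)|
          ≤ 2*ε*((j:ℝ)-1) + 2*ε := by
            refine htri.trans (add_le_add hih hstep)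
        _ = 2*ε*(((j:ℝ)+1)-1) := by ring
  have h1 := chain k hk1 le_rfl
  have hkinv1 : ((k:ℝ))⁻¹ ≤ 1 := by
    rw [inv_le_one_iff₀]; right; exact_mod_cast hk1
  have h2 : dist (fanPt n (((k:ℝ))⁻¹)) fanZero < δ := by
    rw [Subtype.dist_eq, fanPt_val n hcpos.le hkinv1]
    show dist _ (0 : FanAmbient) < δ
    rw [dist_eq_norm, sub_zero, norm_smul_fanBasis, abs_of_pos hcpos]
    exact hkδ
  have h3 := hδ _ h2
  rw [Real.dist_eq] at h3 ⊢
  rw [fanPoint_eq_fanPt]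
  have e1 : 2*ε*((k:ℝ)-1) = η/2 * (((k:ℝ)-1)/(k:ℝ)) := by
    rw [hεdef]; field_simp; ring
  have e2 : ((k:ℝ)-1)/(k:ℝ) ≤ 1 := by
    rw [div_le_one hkR]; linarith
  have e3 : 2*ε*((k:ℝ)-1) ≤ η/2 := by
    rw [e1]
    nlinarith [e2, hη]
  calc |f (fanPt n 1) - f fanZero|
      ≤ |f (fanPt n 1) - f (fanPt n (((k:ℝ))⁻¹))| + |f (fanPt n (((k:ℝ))⁻¹)) - f fanZero| :=
        abs_sub_le _ _ _
    _ < 2*ε*((k:ℝ)-1) + η/2 := by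
        have := add_le_add_right h1 (|f (fanPt n (((k:ℝ))⁻¹)) - f fanZero|)
        linarith [h3, h1]
    _ ≤ η := by linarith [e3]
end
end

section
/- Let M be the metric fan and G the Megrelishvili group with the compact-open topology, acting on M by evaluation. Then for every compact Hausdorff space K with a continuous G-action and every continuous G-equivariant map i : M → K with dense image, the sequence (i(eₙ))_{n≥1} converges to i(0) in K; in particular, since (eₙ) does not converge to 0 in M, the map i is not a topological embedding. -/
noncomputable section

open Set

lemma fanBasis_apply_self (n : ℕ+) : (fanBasis n : ∀ _ : ℕ+, ℝ) n = 1 :=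
  lp.single_apply_self 2 n 1

lemma fanBasis_apply_ne (n : ℕ+) {j : ℕ+} (h : j ≠ n) : (fanBasis n : ∀ _ : ℕ+, ℝ) j = 0 :=
  lp.single_apply_ne 2 n 1 h

lemma norm_fanBasis (n : ℕ+) : ‖fanBasis n‖ = 1 := by
  have := lp.norm_single (p := 2) (E := fun _ : ℕ+ => ℝ) (by norm_num) n (1:ℝ)
  simpa [fanBasis] using this

lemma smul_fanBasis_mem (n : ℕ+) {t : ℝ} (ht : t ∈ Set.Icc (0:ℝ) 1) :
    t • fanBasis n ∈ MetricFan := by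
  refine Set.mem_iUnion.2 ⟨n, ?_⟩
  rw [segment_eq_image]
  exact ⟨t, ht, by simp⟩

lemma mem_metricFan_iff {x : FanAmbient} :
    x ∈ MetricFan ↔ ∃ n : ℕ+, ∃ t ∈ Set.Icc (0:ℝ) 1, x = t • fanBasis n := by
  constructor
  · intro hx
    obtain ⟨n, hn⟩ := Set.mem_iUnion.1 hx
    rw [segment_eq_image] at hn
    obtain ⟨t, ht, h⟩ := hn
    exact ⟨n, t, ht, by simpa using h.symm⟩
  · rintro ⟨n, t, ht, rfl⟩
    exact smul_fanBasis_mem n ht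

lemma abs_coord_le_dist (x y : FanAmbient) (j : ℕ+) :
    |(x : ∀ _ : ℕ+, ℝ) j - (y : ∀ _ : ℕ+, ℝ) j| ≤ dist x y := by
  have := lp.norm_apply_le_norm (E := fun _ : ℕ+ => ℝ) (p := 2) (by norm_num) (x - y) j
  rw [lp.coeFn_sub] at this
  simpa [dist_eq_norm] using this

section Bump
variable (a b t : ℝ)

def bumpFun (s : ℝ) : ℝ :=
  s + (t - (a + b) / 2) * max 0 (1 - |s - (a + b) / 2| / ((b - a) / 2))

variable {a b t}

lemma bump_continuous : Continuous (bumpFun a b t) := by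
  unfold bumpFun
  fun_prop

lemma bump_apply_of_not_mem (hab : a < b) {s : ℝ} (hs : s ∉ Ioo a b) :
    bumpFun a b t s = s := by
  have hr : (0:ℝ) < (b - a) / 2 := by linarith
  have h1 : (b - a) / 2 ≤ |s - (a + b) / 2| := by
    rw [mem_Ioo, not_and_or] at hs
    rcases hs with h | h
    · push_neg at h
      rw [abs_sub_comm, le_abs]
      left; linarith
    · push_neg at h
      rw [le_abs]
      left; linarith
  have : (1 : ℝ) - |s - (a + b) / 2| / ((b - a) / 2) ≤ 0 := by
    rw [sub_nonpos, le_div_iff₀ hr]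
    linarith
  simp [bumpFun, max_eq_left this]

lemma bump_lipschitz_aux (hab : a < b) (s s' : ℝ) :
    |max 0 (1 - |s' - (a + b) / 2| / ((b - a) / 2))
      - max 0 (1 - |s - (a + b) / 2| / ((b - a) / 2))| ≤ |s' - s| / ((b - a) / 2) := by
  have hr : (0:ℝ) < (b - a) / 2 := by linarith
  rw [max_comm 0 _, max_comm 0 _]
  refine le_trans (abs_max_sub_max_le_abs _ _ _) ?_
  have h2 : (1 - |s' - (a + b) / 2| / ((b - a) / 2)) - (1 - |s - (a + b) / 2| / ((b - a) / 2))
      = (|s - (a + b) / 2| - |s' - (a + b) / 2|) / ((b - a) / 2) := by ring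
  rw [h2, abs_div, abs_of_pos hr, div_le_div_iff_of_pos_right hr]
  refine le_trans (abs_abs_sub_abs_le_abs_sub _ _) ?_
  rw [abs_sub_comm]
  apply le_of_eq
  congr 1
  ring

lemma bump_strictMono (hab : a < b) (ht : t ∈ Ioo a b) :
    StrictMono (bumpFun a b t) := by
  have hr : (0:ℝ) < (b - a) / 2 := by linarith
  have htr : |t - (a + b) / 2| < (b - a) / 2 := by
    rw [abs_lt]; constructor <;> [linarith [ht.1]; linarith [ht.2]]
  intro s s' hss
  have key := bump_lipschitz_aux (a:=a) (b:=b) hab s s'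
  have habs : |t - (a + b) / 2| * |max 0 (1 - |s' - (a + b) / 2| / ((b - a) / 2))
      - max 0 (1 - |s - (a + b) / 2| / ((b - a) / 2))| < s' - s := by
    calc |t - (a + b) / 2| * _ ≤ |t - (a + b) / 2| * (|s' - s| / ((b - a) / 2)) :=
          mul_le_mul_of_nonneg_left key (abs_nonneg _)
      _ < ((b - a) / 2) * (|s' - s| / ((b - a) / 2)) := by
          apply mul_lt_mul_of_pos_right htr
          rw [div_pos_iff]
          left
          exact ⟨abs_pos.2 (by linarith), hr⟩
      _ = |s' - s| := by
          rw [eq_comm, eq_comm, mul_comm, div_mul_eq_mul_div, mul_div_assoc]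
          rw [div_self (by linarith : (b - a) / 2 ≠ 0), mul_one]
      _ = s' - s := abs_of_pos (by linarith)
  rw [← abs_mul] at habs
  have h2 := neg_lt_of_abs_lt habs
  unfold bumpFun
  nlinarith

lemma bump_surjective (hab : a < b) (ht : t ∈ Ioo a b) :
    Function.Surjective (bumpFun a b t) := by
  intro v
  rcases le_or_gt v a with hv | hv
  · exact ⟨v, bump_apply_of_not_mem hab (by simp [mem_Ioo]; intro h; linarith)⟩
  rcases le_or_gt b v with hv' | hv'
  · exact ⟨v, bump_apply_of_not_mem hab (by simp [mem_Ioo]; intro h; linarith)⟩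
  · have ha : bumpFun a b t a = a := bump_apply_of_not_mem hab (by simp [mem_Ioo])
    have hb : bumpFun a b t b = b := bump_apply_of_not_mem hab (by simp [mem_Ioo])
    have : v ∈ Icc (bumpFun a b t a) (bumpFun a b t b) := by
      rw [ha, hb]; exact ⟨le_of_lt hv, le_of_lt hv'⟩
    obtain ⟨s, _, hs⟩ := intermediate_value_Icc (le_of_lt hab) (bump_continuous).continuousOn this
    exact ⟨s, hs⟩

lemma bump_apply_mid (hab : a < b) : bumpFun a b t ((a + b) / 2) = t := by
  simp [bumpFun]

/-- The bump homeomorphism of ℝ as an order isomorphism. -/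
def bumpIso (hab : a < b) (ht : t ∈ Ioo a b) : ℝ ≃o ℝ :=
  StrictMono.orderIsoOfSurjective _ (bump_strictMono hab ht) (bump_surjective hab ht)

lemma bumpIso_apply (hab : a < b) (ht : t ∈ Ioo a b) (s : ℝ) :
    bumpIso hab ht s = bumpFun a b t s := rfl

lemma bump_mem_Ioo (hab : a < b) (ht : t ∈ Ioo a b) {s : ℝ} (hs : s ∈ Ioo a b) :
    bumpFun a b t s ∈ Ioo a b := by
  have ha : bumpFun a b t a = a := bump_apply_of_not_mem hab (by simp [mem_Ioo])
  have hb : bumpFun a b t b = b := bump_apply_of_not_mem hab (by simp [mem_Ioo])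
  constructor
  · have := bump_strictMono hab ht hs.1
    rwa [ha] at this
  · have := bump_strictMono hab ht hs.2
    rwa [hb] at this

lemma bump_mem_Icc01 (hab : a < b) (ht : t ∈ Ioo a b) (ha : 0 ≤ a) (hb : b ≤ 1)
    {s : ℝ} (hs : s ∈ Icc (0:ℝ) 1) : bumpFun a b t s ∈ Icc (0:ℝ) 1 := by
  by_cases h : s ∈ Ioo a b
  · have := bump_mem_Ioo hab ht h
    exact ⟨by linarith [this.1], by linarith [this.2]⟩
  · rw [bump_apply_of_not_mem hab h]; exact hs

end Bump

lemma continuous_coord (n : ℕ+) : Continuous (fun x : FanAmbient => (x : ∀ _ : ℕ+, ℝ) n) := by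
  apply (LipschitzWith.of_dist_le_mul (K := 1) (fun x y => ?_)).continuous
  rw [NNReal.coe_one, one_mul, Real.dist_eq]
  exact abs_coord_le_dist x y n

section FanMap
variable (h : ℝ → ℝ) (n : ℕ+)

def fanMapAux (x : FanAmbient) : FanAmbient :=
  x + (h ((x : ∀ _ : ℕ+, ℝ) n) - (x : ∀ _ : ℕ+, ℝ) n) • fanBasis n

lemma fanMapAux_coord (x : FanAmbient) :
    ((fanMapAux h n x : FanAmbient) : ∀ _ : ℕ+, ℝ) n = h ((x : ∀ _ : ℕ+, ℝ) n) := by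
  unfold fanMapAux
  rw [lp.coeFn_add, Pi.add_apply, lp.coeFn_smul, Pi.smul_apply, fanBasis_apply_self]
  simp

lemma fanMapAux_comp (h' : ℝ → ℝ) (hh : ∀ s, h' (h s) = s) (x : FanAmbient) :
    fanMapAux h' n (fanMapAux h n x) = x := by
  have hc := fanMapAux_coord h n x
  unfold fanMapAux at hc ⊢
  rw [hc, hh, add_assoc, ← add_smul]
  ring_nf
  simp

lemma fanMapAux_continuous (hc : Continuous h) : Continuous (fanMapAux h n) := by
  unfold fanMapAux
  exact continuous_id.add (((hc.comp (continuous_coord n)).sub (continuous_coord n)).smul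
    continuous_const)

lemma fanMapAux_eq_self {x : FanAmbient} (hx : h ((x : ∀ _ : ℕ+, ℝ) n) = (x : ∀ _ : ℕ+, ℝ) n) :
    fanMapAux h n x = x := by
  unfold fanMapAux
  rw [hx]
  simp

lemma fanMapAux_smul_self (s : ℝ) : fanMapAux h n (s • fanBasis n) = h s • fanBasis n := by
  unfold fanMapAux
  have hc : ((s • fanBasis n : FanAmbient) : ∀ _ : ℕ+, ℝ) n = s := by
    rw [lp.coeFn_smul, Pi.smul_apply, fanBasis_apply_self, smul_eq_mul, mul_one]
  rw [hc, ← add_smul]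
  ring_nf

lemma fanMapAux_maps (h0 : h 0 = 0) (h01 : ∀ s ∈ Icc (0:ℝ) 1, h s ∈ Icc (0:ℝ) 1)
    {x : FanAmbient} (hx : x ∈ MetricFan) : fanMapAux h n x ∈ MetricFan := by
  obtain ⟨p, s, hs, rfl⟩ := mem_metricFan_iff.1 hx
  by_cases hpn : p = n
  · subst hpn
    rw [fanMapAux_smul_self]
    exact smul_fanBasis_mem p (h01 s hs)
  · have hc : ((s • fanBasis p : FanAmbient) : ∀ _ : ℕ+, ℝ) n = 0 := by
      rw [lp.coeFn_smul, Pi.smul_apply, fanBasis_apply_ne p (Ne.symm hpn), smul_eq_mul, mul_zero]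
    rw [fanMapAux_eq_self h n (by rw [hc, h0])]
    exact hx

end FanMap

section MegBump

variable {k : ℕ+} {t : ℝ}

lemma ak_lt_bk (k : ℕ+) : ((k:ℝ)+1)⁻¹ < ((k:ℝ))⁻¹ := by
  have hk : (0:ℝ) < (k:ℝ) := by exact_mod_cast k.pos
  exact inv_strictAnti₀ hk (by linarith)

lemma ak_pos (k : ℕ+) : (0:ℝ) < ((k:ℝ)+1)⁻¹ := by
  have hk : (0:ℝ) < (k:ℝ) := by exact_mod_cast k.pos
  positivity

lemma bk_le_one (k : ℕ+) : ((k:ℝ))⁻¹ ≤ 1 := by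
  have hk : (1:ℝ) ≤ (k:ℝ) := by exact_mod_cast k.one_le
  rw [inv_le_one_iff₀]
  right; exact hk

lemma inv_pnat_not_mem (k k' : ℕ+) : ((k':ℝ))⁻¹ ∉ Ioo (((k:ℝ)+1)⁻¹) ((k:ℝ))⁻¹ := by
  intro ⟨h1, h2⟩
  have hk : (0:ℝ) < (k:ℝ) := by exact_mod_cast k.pos
  have hk' : (0:ℝ) < (k':ℝ) := by exact_mod_cast k'.pos
  have h3 : (k:ℝ) < (k':ℝ) := by
    have := (inv_lt_inv₀ hk' hk).1 h2
    exact this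
  have h4 : (k':ℝ) < (k:ℝ) + 1 := by
    have := (inv_lt_inv₀ (by linarith) hk').1 h1
    exact this
  have : (k:ℕ) < (k':ℕ) := by exact_mod_cast h3
  have : (k':ℕ) < (k:ℕ) + 1 := by exact_mod_cast h4
  omega

variable (ht : t ∈ Ioo (((k:ℝ)+1)⁻¹) ((k:ℝ))⁻¹)

/-- The bump order isomorphism associated to the interval `(1/(k+1), 1/k)`. -/
def megIso : ℝ ≃o ℝ := bumpIso (ak_lt_bk k) ht

lemma megIso_fix (s : ℝ) (hs : s ∉ Ioo (((k:ℝ)+1)⁻¹) ((k:ℝ))⁻¹) : megIso ht s = s :=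
  bump_apply_of_not_mem (ak_lt_bk k) hs

lemma megIso_symm_fix (s : ℝ) (hs : s ∉ Ioo (((k:ℝ)+1)⁻¹) ((k:ℝ))⁻¹) :
    (megIso ht).symm s = s := by
  conv_lhs => rw [← megIso_fix ht s hs]
  exact (megIso ht).symm_apply_apply s

lemma megIso_maps (s : ℝ) (hs : s ∈ Icc (0:ℝ) 1) : megIso ht s ∈ Icc (0:ℝ) 1 :=
  bump_mem_Icc01 (ak_lt_bk k) ht (le_of_lt (ak_pos k)) (bk_le_one k) hs

lemma megIso_symm_maps (s : ℝ) (hs : s ∈ Icc (0:ℝ) 1) : (megIso ht).symm s ∈ Icc (0:ℝ) 1 := by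
  by_cases h : (megIso ht).symm s ∈ Ioo (((k:ℝ)+1)⁻¹) ((k:ℝ))⁻¹
  · exact ⟨le_of_lt (lt_of_lt_of_le (ak_pos k) (le_of_lt h.1)), le_trans (le_of_lt h.2) (bk_le_one k)⟩
  · have h2 : (megIso ht) ((megIso ht).symm s) = (megIso ht).symm s := megIso_fix ht _ h
    rw [(megIso ht).apply_symm_apply] at h2
    rw [← h2]
    exact hs

/-- The bump homeomorphism of the metric fan supported on segment `n`. -/
def megHomeo (n : ℕ+) : ↥MetricFan ≃ₜ ↥MetricFan where
  toFun x := ⟨fanMapAux (megIso ht) n x,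
    fanMapAux_maps _ n (megIso_fix ht 0 (by intro hc; exact absurd hc.1 (not_lt.2 (le_of_lt (ak_pos k)))))
      (megIso_maps ht) x.2⟩
  invFun x := ⟨fanMapAux ((megIso ht).symm) n x,
    fanMapAux_maps _ n (megIso_symm_fix ht 0 (by intro hc; exact absurd hc.1 (not_lt.2 (le_of_lt (ak_pos k)))))
      (megIso_symm_maps ht) x.2⟩
  left_inv x := Subtype.ext (fanMapAux_comp _ n _ (megIso ht).symm_apply_apply x)
  right_inv x := Subtype.ext (fanMapAux_comp _ n _ (megIso ht).apply_symm_apply x)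
  continuous_toFun := by
    apply Continuous.subtype_mk
    exact (fanMapAux_continuous _ n (megIso ht).continuous).comp continuous_subtype_val
  continuous_invFun := by
    apply Continuous.subtype_mk
    exact (fanMapAux_continuous _ n (megIso ht).symm.continuous).comp continuous_subtype_val

lemma megHomeo_fix (n : ℕ+) (x : ↥MetricFan)
    (hx : ((x : FanAmbient) : ∀ _ : ℕ+, ℝ) n ∉ Ioo (((k:ℝ)+1)⁻¹) ((k:ℝ))⁻¹) :
    megHomeo ht n x = x :=
  Subtype.ext (fanMapAux_eq_self _ n (megIso_fix ht _ hx))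

/-- The bump homeomorphism as an element of the Megrelishvili group. -/
def megBump (n : ℕ+) : MegGroup :=
  ⟨megHomeo ht n, by
    intro x hx
    obtain ⟨k', p, hxp⟩ := hx
    apply megHomeo_fix
    rw [hxp, lp.coeFn_smul, Pi.smul_apply]
    by_cases hpn : p = n
    · subst hpn
      rw [fanBasis_apply_self, smul_eq_mul, mul_one]
      exact inv_pnat_not_mem k k'
    · rw [fanBasis_apply_ne p (Ne.symm hpn), smul_eq_mul, mul_zero]
      intro h
      exact absurd h.1 (not_lt.2 (le_of_lt (ak_pos k)))⟩

lemma megBump_moves (n : ℕ+) {s : ℝ} (hs : s ∈ Icc (0:ℝ) 1) :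
    ((megBump ht n : ↥MetricFan ≃ₜ ↥MetricFan) ⟨s • fanBasis n, smul_fanBasis_mem n hs⟩
      : FanAmbient) = bumpFun (((k:ℝ)+1)⁻¹) ((k:ℝ))⁻¹ t s • fanBasis n :=
  fanMapAux_smul_self _ n s

lemma megBump_fix (n : ℕ+) (x : ↥MetricFan)
    (hx : ((x : FanAmbient) : ∀ _ : ℕ+, ℝ) n ∉ Ioo (((k:ℝ)+1)⁻¹) ((k:ℝ))⁻¹) :
    (megBump ht n : ↥MetricFan ≃ₜ ↥MetricFan) x = x :=
  megHomeo_fix ht n x hx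

end MegBump
lemma coord_eq_zero_of_ne {x : FanAmbient} (hx : x ∈ MetricFan) {n m : ℕ+} (hnm : n ≠ m)
    (hn : ((x : ∀ _ : ℕ+, ℝ) n) ≠ 0) : (x : ∀ _ : ℕ+, ℝ) m = 0 := by
  obtain ⟨p, s, _, rfl⟩ := mem_metricFan_iff.1 hx
  rw [lp.coeFn_smul, Pi.smul_apply, smul_eq_mul] at hn ⊢
  by_cases hpm : m = p
  · exfalso
    have hnp : n ≠ p := fun h => hnm (h.trans hpm.symm)
    rw [fanBasis_apply_ne p hnp, mul_zero] at hn
    exact hn rfl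
  · rw [fanBasis_apply_ne p hpm, mul_zero]

lemma finite_bad {a b : ℝ} (ha : 0 < a) {C : Set ↥MetricFan} (hC : IsCompact C) :
    {n : ℕ+ | ∃ x ∈ C, ((x : FanAmbient) : ∀ _ : ℕ+, ℝ) n ∈ Ioo a b}.Finite := by
  set bad := {n : ℕ+ | ∃ x ∈ C, ((x : FanAmbient) : ∀ _ : ℕ+, ℝ) n ∈ Ioo a b} with hbad
  have hx : ∀ n ∈ bad, ∃ x, x ∈ C ∧ ((x : FanAmbient) : ∀ _ : ℕ+, ℝ) n ∈ Ioo a b :=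
    fun n hn => hn
  haveI : Nonempty ↥MetricFan := ⟨fanZero⟩
  choose! x hxC hxI using hx
  have htb := (hC.image continuous_subtype_val).totallyBounded
  rw [Metric.totallyBounded_iff] at htb
  obtain ⟨T, hTfin, hTsub⟩ := htb (a/2) (by linarith)
  have hφ : ∀ n ∈ bad, ∃ c, c ∈ T ∧ ((x n : FanAmbient) ∈ Metric.ball c (a/2)) := by
    intro n hn
    have : (x n : FanAmbient) ∈ ⋃ y ∈ T, Metric.ball y (a/2) :=
      hTsub ⟨x n, hxC n hn, rfl⟩
    simpa using this
  choose! φ hφT hφball using hφ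
  have hinj : Set.InjOn φ bad := by
    intro n hn m hm hnm
    by_contra hne
    have h1 : dist (x n : FanAmbient) (x m : FanAmbient) < a := by
      calc dist (x n : FanAmbient) (x m : FanAmbient)
          ≤ dist (x n : FanAmbient) (φ n) + dist (φ m) (x m : FanAmbient) := by
            rw [hnm]; exact dist_triangle _ _ _
        _ < a/2 + a/2 := add_lt_add (hφball n hn) (by rw [dist_comm]; exact hφball m hm)
        _ = a := by ring
    have h2 : a < dist (x n : FanAmbient) (x m : FanAmbient) := by
      have hc := abs_coord_le_dist (x n : FanAmbient) (x m : FanAmbient) n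
      have hz : ((x m : FanAmbient) : ∀ _ : ℕ+, ℝ) n = 0 := by
        apply coord_eq_zero_of_ne (x m).2 (Ne.symm hne)
        intro h
        have h2 := (hxI m hm).1
        rw [h] at h2
        exact absurd h2 (not_lt.2 (le_of_lt ha))
      rw [hz, sub_zero] at hc
      exact lt_of_lt_of_le (lt_of_lt_of_le (hxI n hn).1 (le_abs_self _)) hc
    linarith
  exact Set.Finite.of_finite_image (hTfin.subset (Set.image_subset_iff.2 hφT)) hinj

lemma megGroup_nhds_one {U : Set MegGroup} (hU : U ∈ nhds (1 : MegGroup)) :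
    ∃ C : Set ↥MetricFan, IsCompact C ∧
      ∀ g : MegGroup, (∀ x ∈ C, (g : ↥MetricFan ≃ₜ ↥MetricFan) x = x) → g ∈ U := by
  set ι : MegGroup → C(↥MetricFan, ↥MetricFan) :=
    fun g => toContinuousMap (g : ↥MetricFan ≃ₜ ↥MetricFan) with hι
  have h1 : U ∈ Filter.comap ι (nhds (ι 1)) := by
    rw [← nhds_induced]
    exact hU
  obtain ⟨T, hT, hTU⟩ := Filter.mem_comap.1 h1
  have hb := TopologicalSpace.isTopologicalBasis_of_subbasis
    (ContinuousMap.compactOpen_eq (X := ↥MetricFan) (Y := ↥MetricFan))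
  obtain ⟨B, ⟨F, ⟨hFfin, hFsub⟩, rfl⟩, hfB, hBT⟩ := hb.mem_nhds_iff.1 hT
  have hs : ∀ s ∈ F, ∃ Kc, IsCompact Kc ∧ ∃ Uo, IsOpen Uo ∧
      s = {f : C(↥MetricFan, ↥MetricFan) | Set.MapsTo f Kc Uo} := by
    intro s hsF
    obtain ⟨Kc, hKc, Uo, hUo, hseq⟩ := Set.mem_image2.1 (hFsub hsF)
    exact ⟨Kc, hKc, Uo, hUo, hseq.symm⟩
  choose! Kc hKc Uo hUo hseq using hs
  refine ⟨⋃ s ∈ F, Kc s, hFfin.isCompact_biUnion (fun s hsF => hKc s hsF), ?_⟩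
  intro g hg
  apply hTU
  show ι g ∈ T
  apply hBT
  rw [Set.mem_sInter]
  intro s hsF
  rw [hseq s hsF]
  intro y hy
  have hgy : (g : ↥MetricFan ≃ₜ ↥MetricFan) y = y :=
    hg y (Set.mem_biUnion hsF hy)
  have h1s : ι 1 ∈ s := Set.mem_sInter.1 hfB s hsF
  rw [hseq s hsF] at h1s
  have : ι g y = ι 1 y := hgy
  rw [this]
  exact h1s hy
lemma norm_smul_fanBasis (t : ℝ) (n : ℕ+) : ‖t • fanBasis n‖ = |t| := by
  rw [norm_smul, norm_fanBasis, mul_one, Real.norm_eq_abs]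

lemma eq_of_forall_closed_nhds {K : Type*} [TopologicalSpace K] [T2Space K] [CompactSpace K]
    {z Y : K} (h : ∀ W ∈ nhds Y, IsClosed W → z ∈ W) : z = Y := by
  by_contra hne
  obtain ⟨Vz, VY, hVz, hVY, hz, hY, hdisj⟩ := t2_separation hne
  obtain ⟨W, ⟨hWnhds, hWclosed⟩, hWsub⟩ := (closed_nhds_basis Y).mem_iff.1 (hVY.mem_nhds hY)
  exact Set.disjoint_left.1 hdisj hz (hWsub (h W hWnhds hWclosed))

lemma not_tendsto_fanPoint :
    ¬ Filter.Tendsto (fun n : ℕ+ => fanPoint n) Filter.atTop (nhds fanZero) := by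
  intro h
  have h2 := Metric.tendsto_nhds.1 h (1/2) (by norm_num)
  obtain ⟨n, hn⟩ := h2.exists
  have : dist (fanPoint n) fanZero = 1 := by
    rw [Subtype.dist_eq]
    show dist (fanBasis n) (0 : FanAmbient) = 1
    rw [dist_zero_right, norm_fanBasis]
  rw [this] at hn
  norm_num at hn

theorem stmt_14 (K : Type*) [TopologicalSpace K] [CompactSpace K] [T2Space K]
    [MulAction MegGroup K] [ContinuousSMul MegGroup K]
    (i : ↥MetricFan → K) (hi : Continuous i)
    (heq : ∀ (g : MegGroup) (x : ↥MetricFan),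
      i ((g : ↥MetricFan ≃ₜ ↥MetricFan) x) = g • i x)
    (hd : DenseRange i) :
    Filter.Tendsto (fun n : ℕ+ => i (fanPoint n)) Filter.atTop (nhds (i fanZero)) ∧
    ¬ Filter.Tendsto (fun n : ℕ+ => fanPoint n) Filter.atTop (nhds fanZero) ∧
    ¬ Topology.IsEmbedding i := by
  have part1 : Filter.Tendsto (fun n : ℕ+ => i (fanPoint n)) Filter.atTop (nhds (i fanZero)) := by
    rw [Filter.tendsto_iff_ultrafilter]
    intro 𝒰 h𝒰
    classical
    -- the points `t • eₙ` of the fan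
    set seg : ℝ → ℕ+ → ↥MetricFan := fun t n =>
      if h : t ∈ Icc (0:ℝ) 1 then ⟨t • fanBasis n, smul_fanBasis_mem n h⟩ else fanZero
      with hsegdef
    have hsegval : ∀ {t : ℝ}, t ∈ Icc (0:ℝ) 1 → ∀ n, (seg t n : FanAmbient) = t • fanBasis n := by
      intro t h n
      rw [hsegdef]
      simp only [dif_pos h]
    -- ultrafilter limits along each level
    have hyex : ∀ t : ℝ, ∃ x : K, Filter.Tendsto (fun n => i (seg t n)) ↑𝒰 (nhds x) := by
      intro t
      obtain ⟨x, _, hx⟩ := isCompact_univ.ultrafilter_le_nhds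
        (Ultrafilter.map (fun n => i (seg t n)) 𝒰) (by simp)
      exact ⟨x, hx⟩
    choose y hy using hyex
    -- limits of eventually-in-closed-set sequences
    have hmemy : ∀ (t : ℝ) (W : Set K), IsClosed W → (∀ᶠ n in ↑𝒰, i (seg t n) ∈ W) → y t ∈ W :=
      fun t W hW h => hW.mem_of_tendsto (hy t) h
    -- Step A : constancy across each interval of consecutive marked levels
    have stepA : ∀ k : ℕ+, y (((k:ℝ))⁻¹) = y (((k:ℝ)+1)⁻¹) := by
      intro k
      set a' : ℝ := ((k:ℝ)+1)⁻¹ with ha'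
      set b' : ℝ := ((k:ℝ))⁻¹ with hb'
      have hab : a' < b' := ak_lt_bk k
      have ha0 : 0 < a' := ak_pos k
      have hb1 : b' ≤ 1 := bk_le_one k
      have hIooIcc : Ioo a' b' ⊆ Icc (0:ℝ) 1 :=
        fun s hs => ⟨le_of_lt (lt_trans ha0 hs.1), le_of_lt (lt_of_lt_of_le hs.2 hb1)⟩
      set m : ℝ := (a' + b') / 2 with hm
      have hmIoo : m ∈ Ioo a' b' := ⟨by rw [hm]; linarith, by rw [hm]; linarith⟩
      set Y := y m with hY
      -- main claim : both endpoint limits lie in every closed neighborhood of Y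
      have main : ∀ W ∈ nhds Y, IsClosed W → y a' ∈ W ∧ y b' ∈ W := by
        intro W hW hWc
        obtain ⟨W', hW'sub, hW'open, hYW'⟩ := mem_nhds_iff.1 hW
        have hsmul : Continuous fun p : MegGroup × K => p.1 • p.2 := continuous_smul
        have hcont : Filter.Tendsto (fun p : MegGroup × K => p.1 • p.2)
            (nhds ((1 : MegGroup), Y)) (nhds Y) := by
          have h2 := hsmul.continuousAt (x := ((1 : MegGroup), Y))
          rw [ContinuousAt] at h2
          simpa using h2
        have hpre : (fun p : MegGroup × K => p.1 • p.2) ⁻¹' W' ∈ nhds ((1 : MegGroup), Y) :=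
          hcont (hW'open.mem_nhds hYW')
        obtain ⟨U, hU, V, hV, hUV⟩ := mem_nhds_prod_iff.1 hpre
        obtain ⟨C, hCcomp, hCfix⟩ := megGroup_nhds_one hU
        have hbadfin := finite_bad ha0 (b := b') hCcomp
        -- the 𝒰-large set of good indices
        have hA1 : {n : ℕ+ | i (seg m n) ∈ V} ∈ 𝒰 := Filter.mem_map.1 (hy m hV)
        have hA2 : {n : ℕ+ | ∃ x ∈ C, ((x : FanAmbient) : ∀ _ : ℕ+, ℝ) n ∈ Ioo a' b'}ᶜ ∈ 𝒰 := by
          apply h𝒰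
          obtain ⟨N, hN⟩ := hbadfin.bddAbove
          apply Filter.mem_atTop_sets.2
          refine ⟨N + 1, fun p hp => ?_⟩
          intro hmem
          have h1 : ((N:ℕ) + 1) ≤ (p:ℕ) := by exact_mod_cast hp
          have h2 : (p:ℕ) ≤ (N:ℕ) := by exact_mod_cast hN hmem
          omega
        set A := {n : ℕ+ | i (seg m n) ∈ V} ∩
          {n : ℕ+ | ∃ x ∈ C, ((x : FanAmbient) : ∀ _ : ℕ+, ℝ) n ∈ Ioo a' b'}ᶜ with hA
        have hAU : A ∈ 𝒰 := Filter.inter_mem hA1 hA2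
        -- every point of the open interval on a good segment lands in W'
        have key : ∀ n ∈ A, ∀ t' ∈ Ioo a' b', i (seg t' n) ∈ W' := by
          intro n hn t' ht'
          set g := megBump ht' n with hg
          have hgU : g ∈ U := by
            apply hCfix
            intro x hx
            apply megBump_fix
            intro hmem
            exact hn.2 ⟨x, hx, hmem⟩
          have hmove : (g : ↥MetricFan ≃ₜ ↥MetricFan) (seg m n) = seg t' n := by
            apply Subtype.ext
            have h1 : seg m n = ⟨m • fanBasis n, smul_fanBasis_mem n (hIooIcc hmIoo)⟩ := by
              rw [hsegdef]; simp only [dif_pos (hIooIcc hmIoo)]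
            rw [h1, hsegval (hIooIcc ht') n]
            rw [hg]
            rw [megBump_moves ht' n (hIooIcc hmIoo)]
            rw [bump_apply_mid hab]
          have := hUV (Set.mk_mem_prod hgU hn.1)
          rw [Set.mem_preimage] at this
          show i (seg t' n) ∈ W'
          rw [← hmove, heq g (seg m n)]
          exact this
        -- endpoints land in W by taking limits within the interval
        have endpoint : ∀ c ∈ Icc (0:ℝ) 1, ∀ t : ℕ → ℝ, (∀ j, t j ∈ Ioo a' b') →
            Filter.Tendsto t Filter.atTop (nhds c) → ∀ n ∈ A, i (seg c n) ∈ W := by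
          intro c hc t htIoo htc n hn
          have hseq : Filter.Tendsto (fun j => i (seg (t j) n)) Filter.atTop
              (nhds (i (seg c n))) := by
            apply (hi.tendsto _).comp
            rw [tendsto_subtype_rng]
            have hfun : (fun j => ((seg (t j) n : ↥MetricFan) : FanAmbient))
                = fun j => (t j) • fanBasis n := by
              funext j
              exact hsegval (hIooIcc (htIoo j)) n
            rw [hfun, hsegval hc n]
            exact htc.smul_const (fanBasis n)
          apply hWc.mem_of_tendsto hseq
          exact Filter.Eventually.of_forall fun j => hW'sub (key n hn (t j) (htIoo j))
        have hlim1 : Filter.Tendsto (fun j : ℕ => a' + (b' - a')/((j:ℝ)+2)) Filter.atTop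
            (nhds a') := by
          have h0 : Filter.Tendsto (fun j : ℕ => (b' - a')/((j:ℝ)+2)) Filter.atTop (nhds 0) := by
            have := (tendsto_const_div_atTop_nhds_zero_nat (b' - a')).comp
              (Filter.tendsto_add_atTop_nat 2)
            convert this using 2 with j
            show (b' - a') / ((j:ℝ) + 2) = (b' - a') / ((j + 2 : ℕ) : ℝ)
            push_cast
            ring
          simpa using tendsto_const_nhds.add h0
        have hlim2 : Filter.Tendsto (fun j : ℕ => b' - (b' - a')/((j:ℝ)+2)) Filter.atTop
            (nhds b') := by
          have h0 : Filter.Tendsto (fun j : ℕ => (b' - a')/((j:ℝ)+2)) Filter.atTop (nhds 0) := by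
            have := (tendsto_const_div_atTop_nhds_zero_nat (b' - a')).comp
              (Filter.tendsto_add_atTop_nat 2)
            convert this using 2 with j
            show (b' - a') / ((j:ℝ) + 2) = (b' - a') / ((j + 2 : ℕ) : ℝ)
            push_cast
            ring
          simpa using tendsto_const_nhds.sub h0
        have hIoo1 : ∀ j : ℕ, a' + (b' - a')/((j:ℝ)+2) ∈ Ioo a' b' := by
          intro j
          have hj2 : (0:ℝ) < (j:ℝ) + 2 := by positivity
          constructor
          · have : (0:ℝ) < (b' - a')/((j:ℝ)+2) := div_pos (by linarith) hj2
            linarith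
          · have h1 : (b' - a')/((j:ℝ)+2) < b' - a' := by
              rw [div_lt_iff₀ hj2]
              nlinarith
            linarith
        have hIoo2 : ∀ j : ℕ, b' - (b' - a')/((j:ℝ)+2) ∈ Ioo a' b' := by
          intro j
          have hj2 : (0:ℝ) < (j:ℝ) + 2 := by positivity
          constructor
          · have h1 : (b' - a')/((j:ℝ)+2) < b' - a' := by
              rw [div_lt_iff₀ hj2]
              nlinarith
            linarith
          · have : (0:ℝ) < (b' - a')/((j:ℝ)+2) := div_pos (by linarith) hj2
            linarith
        have haIcc : a' ∈ Icc (0:ℝ) 1 := ⟨le_of_lt ha0, le_trans (le_of_lt hab) hb1⟩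
        have hbIcc : b' ∈ Icc (0:ℝ) 1 := ⟨le_of_lt (lt_trans ha0 hab), hb1⟩
        constructor
        · apply hmemy a' W hWc
          exact Filter.mem_of_superset hAU
            (fun n hn => endpoint a' haIcc _ hIoo1 hlim1 n hn)
        · apply hmemy b' W hWc
          exact Filter.mem_of_superset hAU
            (fun n hn => endpoint b' hbIcc _ hIoo2 hlim2 n hn)
      have hya : y a' = Y := eq_of_forall_closed_nhds (fun W hW hWc => (main W hW hWc).1)
      have hyb : y b' = Y := eq_of_forall_closed_nhds (fun W hW hWc => (main W hW hWc).2)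
      rw [hya, hyb]
    -- Step B : all marked levels have the same limit
    have stepB : ∀ k : ℕ+, y (((k:ℝ))⁻¹) = y 1 := by
      intro k
      induction k using PNat.recOn with
      | one => norm_num
      | succ k ih =>
        have hc : (((k+1 : ℕ+)):ℝ) = (k:ℝ) + 1 := by push_cast; ring
        rw [← ih, hc, stepA k]
    -- Step C : the common limit is i fanZero
    have stepC : y 1 = i fanZero := by
      apply eq_of_forall_closed_nhds
      intro W hW hWc
      have hpre : i ⁻¹' W ∈ nhds fanZero := hi.continuousAt.preimage_mem_nhds hW
      obtain ⟨δ, hδ, hball⟩ := Metric.mem_nhds_iff.1 hpre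
      obtain ⟨k, hk⟩ := exists_nat_one_div_lt hδ
      set k' : ℕ+ := ⟨k + 1, Nat.succ_pos k⟩ with hk'
      have hk'pos : (0:ℝ) < (k':ℝ) := by exact_mod_cast k'.pos
      have hkIcc : ((k':ℝ))⁻¹ ∈ Icc (0:ℝ) 1 :=
        ⟨le_of_lt (by positivity), bk_le_one k'⟩
      have hmem : ∀ n, i (seg (((k':ℝ))⁻¹) n) ∈ W := by
        intro n
        apply hball
        show dist (seg (((k':ℝ))⁻¹) n) fanZero < δ
        rw [Subtype.dist_eq, hsegval hkIcc n]
        show dist (((k':ℝ))⁻¹ • fanBasis n) (0 : FanAmbient) < δ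
        rw [dist_zero_right, norm_smul_fanBasis, abs_of_pos (by positivity)]
        have : ((k':ℝ)) = (k:ℝ) + 1 := by
          have h0 : ((k' : ℕ+) : ℕ) = k + 1 := rfl
          rw [show ((k':ℝ)) = (((k':ℕ)):ℝ) from rfl, h0]
          push_cast
          ring
        rw [this, ← one_div]
        exact hk
      have := hmemy (((k':ℝ))⁻¹) W hWc (Filter.Eventually.of_forall hmem)
      rw [stepB k'] at this
      exact this
    -- conclusion
    have hfan : ∀ n, seg 1 n = fanPoint n := by
      intro n
      apply Subtype.ext
      rw [hsegval (by norm_num) n]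
      show (1:ℝ) • fanBasis n = fanBasis n
      rw [one_smul]
    have := hy 1
    rw [stepC] at this
    convert this using 2 with n
    rw [hfan n]
  refine ⟨part1, not_tendsto_fanPoint, ?_⟩
  intro hemb
  apply not_tendsto_fanPoint
  rw [hemb.tendsto_nhds_iff]
  exact part1
end
end
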